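/- Let φ be a simple, normalized valuation on convex polyhedral cones in ℝⁿ, φ° the additive extension of its dual valuation, and κ(P,x) := φ°(Tan(P,x)) for x ∈ P, κ(P,x) := 0 for x ∉ P. Then for every polyhedron P ⊂ ℝⁿ, κ(P,x) ≠ 0 for only finitely many x, and Σ_{x ∈ P} κ(P,x) = χ(P), the Euler characteristic of P. -/

import Mathlib

open scoped RealInnerProductSpace
open MeasureTheory

attribute [local instance] Classical.propDecidable

noncomputable section

abbrev E (n : ℕ) : Type := EuclideanSpace ℝ (Fin n)

/-- The dual cone `C° = {x : ⟪x,y⟫ ≤ 0 for all y ∈ C}`. -/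
def polarDual {n : ℕ} (C : Set (E n)) : Set (E n) := {x | ∀ y ∈ C, ⟪x, y⟫ ≤ 0}

/-- A convex polyhedral cone: a finite intersection of closed halfspaces whose
boundaries contain the origin (empty intersection = ℝⁿ). -/
def IsPolyhedralCone {n : ℕ} (C : Set (E n)) : Prop :=
  ∃ s : Finset (E n), C = {x | ∀ u ∈ s, ⟪u, x⟫ ≤ 0}

/-- A (nonempty) compact convex polytope: the convex hull of a nonempty finite set. -/
def IsPolytope {n : ℕ} (P : Set (E n)) : Prop :=
  ∃ s : Finset (E n), s.Nonempty ∧ P = convexHull ℝ (s : Set (E n))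

/-- A polyhedron: a finite union of compact convex polytopes (possibly empty). -/
def IsPolyhedron {n : ℕ} (P : Set (E n)) : Prop :=
  ∃ F : Finset (Set (E n)), (∀ A ∈ F, IsPolytope A) ∧ P = ⋃₀ F

/-- The tangent cone `Tan(P,x) = {v : [x, x+λv] ⊆ P for some λ > 0}`. -/
def Tan {n : ℕ} (P : Set (E n)) (x : E n) : Set (E n) :=
  {v | ∃ l : ℝ, 0 < l ∧ segment ℝ x (x + l • v) ⊆ P}

/-- The (linear) dimension of a cone, i.e. the dimension of its linear span. -/
def coneDim {n : ℕ} (C : Set (E n)) : ℕ := Module.finrank ℝ (Submodule.span ℝ C)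

/-- A valuation on the family of convex polyhedral cones. -/
def IsConeValuation {n : ℕ} (φ : Set (E n) → ℝ) : Prop :=
  ∀ C D : Set (E n), IsPolyhedralCone C → IsPolyhedralCone D → IsPolyhedralCone (C ∪ D) →
    φ (C ∪ D) + φ (C ∩ D) = φ C + φ D

/-- A simple valuation vanishes on cones of dimension `< n`. -/
def IsSimple {n : ℕ} (φ : Set (E n) → ℝ) : Prop :=
  ∀ C : Set (E n), IsPolyhedralCone C → coneDim C < n → φ C = 0

/-- A finite union of convex polyhedral cones (possibly empty). -/
def IsConeUnion {n : ℕ} (S : Set (E n)) : Prop :=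
  ∃ F : Finset (Set (E n)), (∀ A ∈ F, IsPolyhedralCone A) ∧ S = ⋃₀ F

/-- A relatively open polyhedral cone: the relative interior of a convex polyhedral cone. -/
def IsROCone {n : ℕ} (A : Set (E n)) : Prop :=
  ∃ C : Set (E n), IsPolyhedralCone C ∧ A = intrinsicInterior ℝ C

/-- A finite union of relatively open polyhedral cones (possibly empty). -/
def IsROConeUnion {n : ℕ} (S : Set (E n)) : Prop :=
  ∃ F : Finset (Set (E n)), (∀ A ∈ F, IsROCone A) ∧ S = ⋃₀ F

/-- The normal cone `N(P,x) = {u : ⟪u, y - x⟫ ≤ 0 for all y ∈ P}`. -/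
def normalCone {n : ℕ} (P : Set (E n)) (x : E n) : Set (E n) :=
  {u | ∀ y ∈ P, ⟪u, y - x⟫ ≤ 0}

/-- The outer angle `Γ(C) = σ(C° ∩ S^{n-1})`, expressed via the normalized
solid-angle (cone-volume) measure, which agrees with the normalized spherical
Lebesgue measure of `C° ∩ S^{n-1}` for cones `C°`. -/
def outerAngle {n : ℕ} (C : Set (E n)) : ℝ :=
  (volume (polarDual C ∩ Metric.closedBall (0 : E n) 1)).toReal /
    (volume (Metric.closedBall (0 : E n) 1)).toReal


section Cones
variable {V : Type*} [NormedAddCommGroup V] [InnerProductSpace ℝ V]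

def hCone (s : Finset V) : Set V := {x | ∀ u ∈ s, ⟪u, x⟫ ≤ 0}

def fgCone (t : Finset V) : Set V :=
  {x | ∃ c : V → ℝ, (∀ v, 0 ≤ c v) ∧ x = ∑ v ∈ t, c v • v}

lemma zero_mem_fgCone (t : Finset V) : (0:V) ∈ fgCone t :=
  ⟨0, fun _ => le_rfl, by simp⟩

lemma mem_fgCone_of_mem {t : Finset V} {w : V} (hw : w ∈ t) : w ∈ fgCone t := by
  classical
  refine ⟨fun v => if v = w then 1 else 0, fun v => by by_cases h : v = w <;> simp [h], ?_⟩
  have : ∀ v ∈ t, (if v = w then (1:ℝ) else 0) • v = if v = w then v else 0 := by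
    intro v _; split <;> simp
  rw [Finset.sum_congr rfl this, Finset.sum_ite_eq' t w (fun v => v), if_pos hw]

lemma add_mem_fgCone {t : Finset V} {x y : V} (hx : x ∈ fgCone t) (hy : y ∈ fgCone t) :
    x + y ∈ fgCone t := by
  obtain ⟨c, hc, rfl⟩ := hx; obtain ⟨d, hd, rfl⟩ := hy
  refine ⟨c + d, fun v => add_nonneg (hc v) (hd v), ?_⟩
  rw [← Finset.sum_add_distrib]
  exact Finset.sum_congr rfl fun v _ => by simp [add_smul]

lemma smul_mem_fgCone {t : Finset V} {x : V} {a : ℝ} (ha : 0 ≤ a) (hx : x ∈ fgCone t) :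
    a • x ∈ fgCone t := by
  obtain ⟨c, hc, rfl⟩ := hx
  refine ⟨fun v => a * c v, fun v => mul_nonneg ha (hc v), ?_⟩
  rw [Finset.smul_sum]
  exact Finset.sum_congr rfl fun v _ => (smul_smul a (c v) v)

lemma sum_mem_fgCone {ι : Type*} {t : Finset V} {s : Finset ι} {f : ι → V}
    (h : ∀ i ∈ s, f i ∈ fgCone t) : (∑ i ∈ s, f i) ∈ fgCone t :=
  Finset.sum_induction f (· ∈ fgCone t) (fun _ _ => add_mem_fgCone) (zero_mem_fgCone t) h

lemma fgCone_subset {t X : Finset V} (h : ∀ w ∈ t, w ∈ fgCone X) : fgCone t ⊆ fgCone X := by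
  rintro x ⟨c, hc, rfl⟩
  exact sum_mem_fgCone fun v hv => smul_mem_fgCone (hc v) (h v hv)

lemma inner_sum_smul (u : V) (t : Finset V) (c : V → ℝ) :
    ⟪u, ∑ v ∈ t, c v • v⟫ = ∑ v ∈ t, c v * ⟪u, v⟫ := by
  rw [inner_sum]
  exact Finset.sum_congr rfl fun v _ => real_inner_smul_right u v (c v)


/-- Generators for the intersection of a finitely generated cone with a halfspace. -/
noncomputable def cutGens (u : V) (t : Finset V) : Finset V :=
  t.filter (fun w => ⟪u, w⟫ ≤ 0) ∪
    ((t ×ˢ t).filter (fun pq => 0 < ⟪u, pq.1⟫ ∧ ⟪u, pq.2⟫ < 0)).image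
      (fun pq => ⟪u, pq.1⟫ • pq.2 - ⟪u, pq.2⟫ • pq.1)

lemma cutGens_mem_fgCone {u : V} {t : Finset V} {g : V} (hg : g ∈ cutGens u t) :
    g ∈ fgCone t ∧ ⟪u, g⟫ ≤ 0 := by
  classical
  rw [cutGens, Finset.mem_union] at hg
  rcases hg with hg | hg
  · rw [Finset.mem_filter] at hg
    exact ⟨mem_fgCone_of_mem hg.1, hg.2⟩
  · rw [Finset.mem_image] at hg
    obtain ⟨⟨p, q⟩, hpq, rfl⟩ := hg
    rw [Finset.mem_filter, Finset.mem_product] at hpq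
    obtain ⟨⟨hp, hq⟩, hup, huq⟩ := hpq
    constructor
    · have h1 : ⟪u, p⟫ • q ∈ fgCone t := smul_mem_fgCone (le_of_lt hup) (mem_fgCone_of_mem hq)
      have h2 : (-⟪u, q⟫) • p ∈ fgCone t :=
        smul_mem_fgCone (by linarith) (mem_fgCone_of_mem hp)
      have := add_mem_fgCone h1 h2
      rwa [neg_smul, ← sub_eq_add_neg] at this
    · rw [inner_sub_right, real_inner_smul_right, real_inner_smul_right]
      ring_nf
      nlinarith

lemma fgCone_inter_halfspace (u : V) (t : Finset V) :
    fgCone t ∩ {x | ⟪u, x⟫ ≤ 0} = fgCone (cutGens u t) := by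
  classical
  apply Set.Subset.antisymm
  · -- hard direction
    rintro x ⟨⟨c, hc, rfl⟩, hx⟩
    simp only [Set.mem_setOf_eq] at hx
    -- strong induction on the number of "active" generators with nonzero inner product
    suffices H : ∀ (k : ℕ) (c : V → ℝ), (∀ v, 0 ≤ c v) →
        (t.filter fun w => c w ≠ 0 ∧ ⟪u, w⟫ ≠ 0).card ≤ k →
        ⟪u, ∑ v ∈ t, c v • v⟫ ≤ 0 → (∑ v ∈ t, c v • v) ∈ fgCone (cutGens u t) by
      exact H _ c hc le_rfl hx
    intro k
    induction k with
    | zero =>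
      intro c hc hcard hsum
      apply sum_mem_fgCone
      intro v hv
      by_cases h0 : c v = 0
      · rw [h0, zero_smul]; exact zero_mem_fgCone _
      · have huv : ⟪u, v⟫ = 0 := by
          by_contra hne
          have : v ∈ t.filter fun w => c w ≠ 0 ∧ ⟪u, w⟫ ≠ 0 := by
            rw [Finset.mem_filter]; exact ⟨hv, h0, hne⟩
          have := Finset.card_pos.mpr ⟨v, this⟩
          omega
        apply smul_mem_fgCone (hc v)
        apply mem_fgCone_of_mem
        rw [cutGens, Finset.mem_union]
        exact Or.inl (Finset.mem_filter.mpr ⟨hv, le_of_eq huv⟩)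
    | succ k ih =>
      intro c hc hcard hsum
      by_cases hP : ∃ w ∈ t, c w ≠ 0 ∧ 0 < ⟪u, w⟫
      · obtain ⟨wp, hwpt, hcwp, hup⟩ := hP
        -- find a negative one
        have hN : ∃ w ∈ t, c w ≠ 0 ∧ ⟪u, w⟫ < 0 := by
          by_contra hno
          push_neg at hno
          have hpos : 0 < ⟪u, ∑ v ∈ t, c v • v⟫ := by
            rw [inner_sum_smul]
            apply Finset.sum_pos'
            · intro v hv
              by_cases h0 : c v = 0
              · simp [h0]
              · exact mul_nonneg (hc v) (hno v hv h0)
            · exact ⟨wp, hwpt, mul_pos (lt_of_le_of_ne (hc wp) (Ne.symm hcwp)) hup⟩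
          linarith
        obtain ⟨wm, hwmt, hcwm, hum⟩ := hN
        have hwpm : wp ≠ wm := fun h => by rw [h] at hup; linarith
        set a : ℝ := ⟪u, wp⟫ with ha
        set b : ℝ := -⟪u, wm⟫ with hb
        have hapos : 0 < a := hup
        have hbpos : 0 < b := by rw [hb]; linarith
        have hcp : 0 < c wp := lt_of_le_of_ne (hc wp) (Ne.symm hcwp)
        have hcm : 0 < c wm := lt_of_le_of_ne (hc wm) (Ne.symm hcwm)
        set μ : ℝ := min (c wp / b) (c wm / a) with hμ
        have hμpos : 0 < μ := lt_min (div_pos hcp hbpos) (div_pos hcm hapos)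
        set z : V := a • wm + b • wp with hz
        have hzmem : z ∈ cutGens u t := by
          rw [cutGens, Finset.mem_union]
          right
          rw [Finset.mem_image]
          refine ⟨(wp, wm), ?_, ?_⟩
          · rw [Finset.mem_filter, Finset.mem_product]
            exact ⟨⟨hwpt, hwmt⟩, hup, by rw [hb] at hbpos; linarith⟩
          · rw [hz, ha, hb, neg_smul, ← sub_eq_add_neg]
        have huz : ⟪u, z⟫ = 0 := by
          rw [hz, inner_add_right, real_inner_smul_right, real_inner_smul_right, ha, hb]; ring
        set c' : V → ℝ := Function.update (Function.update c wp (c wp - μ * b)) wm (c wm - μ * a)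
          with hc'
        have hc'p : c' wp = c wp - μ * b := by
          rw [hc', Function.update_of_ne hwpm, Function.update_self]
        have hc'm : c' wm = c wm - μ * a := by rw [hc', Function.update_self]
        have hc'other : ∀ v, v ≠ wp → v ≠ wm → c' v = c v := by
          intro v h1 h2
          rw [hc', Function.update_of_ne h2, Function.update_of_ne h1]
        have hc'p_nonneg : 0 ≤ c wp - μ * b := by
          have h := (le_div_iff₀ hbpos).1 (min_le_left (c wp / b) (c wm / a))
          rw [hμ]; linarith
        have hc'm_nonneg : 0 ≤ c wm - μ * a := by
          have h := (le_div_iff₀ hapos).1 (min_le_right (c wp / b) (c wm / a))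
          rw [hμ]; linarith
        have hc'nonneg : ∀ v, 0 ≤ c' v := by
          intro v
          by_cases h1 : v = wm
          · rw [h1, hc'm]; exact hc'm_nonneg
          by_cases h2 : v = wp
          · rw [h2]; rw [hc'p]; exact hc'p_nonneg
          · rw [hc'other v h2 h1]; exact hc v
        -- one of the two coefficients vanishes
        have hzero : c' wp = 0 ∨ c' wm = 0 := by
          rcases min_cases (c wp / b) (c wm / a) with ⟨hmin, _⟩ | ⟨hmin, _⟩
          · left; rw [hc'p, hμ, hmin]; field_simp; ring
          · right; rw [hc'm, hμ, hmin]; field_simp; ring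
        -- sum identity
        have hsumid : ∑ v ∈ t, c' v • v = (∑ v ∈ t, c v • v) - μ • z := by
          have key : ∀ v ∈ t, c' v • v = c v • v -
              ((if v = wp then (μ * b) • wp else 0) + (if v = wm then (μ * a) • wm else 0)) := by
            intro v hv
            by_cases h1 : v = wm
            · subst h1
              rw [if_neg (fun h => hwpm h.symm), if_pos rfl, hc'm, sub_smul, zero_add]
            by_cases h2 : v = wp
            · subst h2
              rw [if_pos rfl, if_neg h1, hc'p, sub_smul, add_zero]
            · rw [hc'other v h2 h1, if_neg h2, if_neg h1, add_zero, sub_zero]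
          rw [Finset.sum_congr rfl key, Finset.sum_sub_distrib, Finset.sum_add_distrib]
          rw [Finset.sum_ite_eq' t wp, Finset.sum_ite_eq' t wm, if_pos hwpt, if_pos hwmt]
          rw [hz, smul_add, smul_smul, smul_smul]
          congr 1
          exact add_comm _ _
        have hsum' : ⟪u, ∑ v ∈ t, c' v • v⟫ ≤ 0 := by
          rw [hsumid, inner_sub_right, real_inner_smul_right, huz]
          simpa using hsum
        have hcard' : (t.filter fun w => c' w ≠ 0 ∧ ⟪u, w⟫ ≠ 0).card ≤ k := by
          rcases hzero with h0 | h0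
          · have hsub : (t.filter fun w => c' w ≠ 0 ∧ ⟪u, w⟫ ≠ 0) ⊆
                (t.filter fun w => c w ≠ 0 ∧ ⟪u, w⟫ ≠ 0).erase wp := by
              intro v hv
              rw [Finset.mem_filter] at hv
              obtain ⟨hvt, hv1, hv2⟩ := hv
              have hvwp : v ≠ wp := fun h => hv1 (h ▸ h0)
              rw [Finset.mem_erase]
              refine ⟨hvwp, Finset.mem_filter.mpr ⟨hvt, ?_, hv2⟩⟩
              by_cases h1 : v = wm
              · rw [h1]; exact hcwm
              · rw [← hc'other v hvwp h1]; exact hv1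
            have hin : wp ∈ t.filter fun w => c w ≠ 0 ∧ ⟪u, w⟫ ≠ 0 :=
              Finset.mem_filter.mpr ⟨hwpt, hcwp, ne_of_gt hup⟩
            calc (t.filter fun w => c' w ≠ 0 ∧ ⟪u, w⟫ ≠ 0).card
                ≤ ((t.filter fun w => c w ≠ 0 ∧ ⟪u, w⟫ ≠ 0).erase wp).card :=
                  Finset.card_le_card hsub
              _ = (t.filter fun w => c w ≠ 0 ∧ ⟪u, w⟫ ≠ 0).card - 1 :=
                  Finset.card_erase_of_mem hin
              _ ≤ k := by omega
          · have hsub : (t.filter fun w => c' w ≠ 0 ∧ ⟪u, w⟫ ≠ 0) ⊆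
                (t.filter fun w => c w ≠ 0 ∧ ⟪u, w⟫ ≠ 0).erase wm := by
              intro v hv
              rw [Finset.mem_filter] at hv
              obtain ⟨hvt, hv1, hv2⟩ := hv
              have hvwm : v ≠ wm := fun h => hv1 (h ▸ h0)
              rw [Finset.mem_erase]
              refine ⟨hvwm, Finset.mem_filter.mpr ⟨hvt, ?_, hv2⟩⟩
              by_cases h1 : v = wp
              · rw [h1]; exact hcwp
              · rw [← hc'other v h1 hvwm]; exact hv1
            have hin : wm ∈ t.filter fun w => c w ≠ 0 ∧ ⟪u, w⟫ ≠ 0 :=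
              Finset.mem_filter.mpr ⟨hwmt, hcwm, ne_of_lt hum⟩
            calc (t.filter fun w => c' w ≠ 0 ∧ ⟪u, w⟫ ≠ 0).card
                ≤ ((t.filter fun w => c w ≠ 0 ∧ ⟪u, w⟫ ≠ 0).erase wm).card :=
                  Finset.card_le_card hsub
              _ = (t.filter fun w => c w ≠ 0 ∧ ⟪u, w⟫ ≠ 0).card - 1 :=
                  Finset.card_erase_of_mem hin
              _ ≤ k := by omega
        have hy := ih c' hc'nonneg hcard' hsum'
        have : ∑ v ∈ t, c v • v = (∑ v ∈ t, c' v • v) + μ • z := by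
          rw [hsumid]; abel
        rw [this]
        exact add_mem_fgCone hy (smul_mem_fgCone (le_of_lt hμpos) (mem_fgCone_of_mem hzmem))
      · -- no positive: directly in filter part
        push_neg at hP
        apply sum_mem_fgCone
        intro v hv
        by_cases h0 : c v = 0
        · rw [h0, zero_smul]; exact zero_mem_fgCone _
        · apply smul_mem_fgCone (hc v)
          apply mem_fgCone_of_mem
          rw [cutGens, Finset.mem_union]
          exact Or.inl (Finset.mem_filter.mpr ⟨hv, (hP v hv h0)⟩)
  · intro x hx
    constructor
    · exact fgCone_subset (fun w hw => (cutGens_mem_fgCone hw).1) hx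
    · obtain ⟨c, hc, rfl⟩ := hx
      simp only [Set.mem_setOf_eq]
      rw [inner_sum_smul]
      apply Finset.sum_nonpos
      intro g hg
      exact mul_nonpos_iff.mpr (Or.inl ⟨hc g, (cutGens_mem_fgCone hg).2⟩)


/-- Generators of the dual description of `hCone s + ray v`. -/
noncomputable def rayGens (v : V) (s : Finset V) : Finset V :=
  s.filter (fun u => ⟪u, v⟫ ≤ 0) ∪
    ((s ×ˢ s).filter (fun pq => 0 < ⟪pq.1, v⟫ ∧ ⟪pq.2, v⟫ < 0)).image
      (fun pq => ⟪pq.1, v⟫ • pq.2 - ⟪pq.2, v⟫ • pq.1)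

lemma hCone_add_ray (v : V) (s : Finset V) :
    {x | ∃ l : ℝ, 0 ≤ l ∧ x - l • v ∈ hCone s} = hCone (rayGens v s) := by
  classical
  apply Set.Subset.antisymm
  · rintro x ⟨l, hl, hx⟩
    intro g hg
    rw [rayGens, Finset.mem_union] at hg
    rcases hg with hg | hg
    · rw [Finset.mem_filter] at hg
      have h1 : ⟪g, x - l • v⟫ ≤ 0 := hx g hg.1
      rw [inner_sub_right, real_inner_smul_right] at h1
      nlinarith [hg.2]
    · rw [Finset.mem_image] at hg
      obtain ⟨⟨u₁, u₂⟩, hpq, rfl⟩ := hg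
      rw [Finset.mem_filter, Finset.mem_product] at hpq
      obtain ⟨⟨h1, h2⟩, ha, hb⟩ := hpq
      have e1 : ⟪u₁, x - l • v⟫ ≤ 0 := hx u₁ h1
      have e2 : ⟪u₂, x - l • v⟫ ≤ 0 := hx u₂ h2
      rw [inner_sub_right, real_inner_smul_right] at e1 e2
      rw [inner_sub_left, real_inner_smul_left, real_inner_smul_left]
      nlinarith
  · intro x hx
    by_cases hpos : ∃ u ∈ s, 0 < ⟪u, v⟫
    · have hne : (s.filter (fun u => 0 < ⟪u, v⟫)).Nonempty := by
        obtain ⟨u, hu, hv⟩ := hpos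
        exact ⟨u, Finset.mem_filter.mpr ⟨hu, hv⟩⟩
      obtain ⟨u₁, hu₁, hmax⟩ := Finset.exists_max_image (s.filter (fun u => 0 < ⟪u, v⟫))
        (fun u => ⟪u, x⟫ / ⟪u, v⟫) hne
      rw [Finset.mem_filter] at hu₁
      obtain ⟨hu₁s, ha₁⟩ := hu₁
      refine ⟨max 0 (⟪u₁, x⟫ / ⟪u₁, v⟫), le_max_left _ _, ?_⟩
      intro u hu
      rw [inner_sub_right, real_inner_smul_right, sub_nonpos]
      rcases lt_trichotomy (⟪u, v⟫ : ℝ) 0 with hneg | hzero | hposu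
      · -- need : ⟪u,x⟫ ≤ l * ⟪u,v⟫  i.e.  l ≤ ⟪u,x⟫/⟪u,v⟫
        have hub : u ∈ rayGens v s := by
          rw [rayGens, Finset.mem_union]
          exact Or.inl (Finset.mem_filter.mpr ⟨hu, le_of_lt hneg⟩)
        have hux : ⟪u, x⟫ ≤ 0 := hx u hub
        have hl : max 0 (⟪u₁, x⟫ / ⟪u₁, v⟫) ≤ ⟪u, x⟫ / ⟪u, v⟫ := by
          apply max_le
          · exact div_nonneg_iff.mpr (Or.inr ⟨hux, le_of_lt hneg⟩)
          · -- pair constraint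
            have hgmem : (⟪u₁, v⟫ • u - ⟪u, v⟫ • u₁) ∈ rayGens v s := by
              rw [rayGens, Finset.mem_union]
              right
              rw [Finset.mem_image]
              exact ⟨(u₁, u), Finset.mem_filter.mpr
                ⟨Finset.mem_product.mpr ⟨hu₁s, hu⟩, ha₁, hneg⟩, rfl⟩
            have hg := hx _ hgmem
            rw [inner_sub_left, real_inner_smul_left, real_inner_smul_left] at hg
            rw [le_div_iff_of_neg hneg, div_mul_eq_mul_div, le_div_iff₀ ha₁]
            nlinarith [hg]
        calc ⟪u, x⟫ = (⟪u, x⟫ / ⟪u, v⟫) * ⟪u, v⟫ := by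
              rw [div_mul_cancel₀ _ (ne_of_lt hneg)]
          _ ≤ max 0 (⟪u₁, x⟫ / ⟪u₁, v⟫) * ⟪u, v⟫ :=
              mul_le_mul_of_nonpos_right hl (le_of_lt hneg)
      · rw [hzero, mul_zero]
        have hub : u ∈ rayGens v s := by
          rw [rayGens, Finset.mem_union]
          exact Or.inl (Finset.mem_filter.mpr ⟨hu, le_of_eq hzero⟩)
        exact hx u hub
      · have hle : ⟪u, x⟫ / ⟪u, v⟫ ≤ ⟪u₁, x⟫ / ⟪u₁, v⟫ :=
          hmax u (Finset.mem_filter.mpr ⟨hu, hposu⟩)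
        have : ⟪u, x⟫ / ⟪u, v⟫ ≤ max 0 (⟪u₁, x⟫ / ⟪u₁, v⟫) := le_trans hle (le_max_right _ _)
        calc ⟪u, x⟫ = (⟪u, x⟫ / ⟪u, v⟫) * ⟪u, v⟫ := by
              rw [div_mul_cancel₀ _ (ne_of_gt hposu)]
          _ ≤ max 0 (⟪u₁, x⟫ / ⟪u₁, v⟫) * ⟪u, v⟫ :=
              mul_le_mul_of_nonneg_right this (le_of_lt hposu)
    · refine ⟨0, le_rfl, ?_⟩
      intro u hu
      push_neg at hpos
      rw [zero_smul, sub_zero]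
      have : u ∈ rayGens v s := by
        rw [rayGens, Finset.mem_union]
        exact Or.inl (Finset.mem_filter.mpr ⟨hu, hpos u hu⟩)
      exact hx u this


lemma fgCone_insert {v : V} {t : Finset V} (hv : v ∉ t) :
    fgCone (insert v t) = {x | ∃ l : ℝ, 0 ≤ l ∧ x - l • v ∈ fgCone t} := by
  classical
  ext x
  constructor
  · rintro ⟨c, hc, rfl⟩
    rw [Finset.sum_insert hv]
    exact ⟨c v, hc v, ⟨c, hc, by abel⟩⟩
  · rintro ⟨l, hl, c, hc, hx⟩
    refine ⟨fun w => if w = v then l else c w, fun w => by by_cases h : w = v <;> simp [h, hl, hc w], ?_⟩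
    rw [Finset.sum_insert hv]
    show x = (if v = v then l else c v) • v + ∑ w ∈ t, (if w = v then l else c w) • w
    rw [if_pos rfl]
    have : ∀ w ∈ t, (if w = v then l else c w) • w = c w • w := by
      intro w hw
      rw [if_neg (fun h : w = v => hv (h ▸ hw))]
    rw [Finset.sum_congr rfl this]
    have := sub_eq_iff_eq_add.mp hx
    rw [this]; abel

lemma exists_hCone_singleton_zero [FiniteDimensional ℝ V] :
    ∃ s : Finset V, ({0} : Set V) = hCone s := by
  classical
  set b := Module.finBasis ℝ V with hb
  refine ⟨(Finset.univ.image b) ∪ (Finset.univ.image (fun i => -(b i))), ?_⟩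
  apply Set.Subset.antisymm
  · rintro x rfl
    intro u _
    rw [inner_zero_right]
  · intro x hx
    have hker : ∀ i, ⟪b i, x⟫ = 0 := by
      intro i
      have h1 : ⟪b i, x⟫ ≤ 0 := hx (b i) (by
        rw [Finset.mem_union]; exact Or.inl (Finset.mem_image.mpr ⟨i, Finset.mem_univ i, rfl⟩))
      have h2 : ⟪-(b i), x⟫ ≤ 0 := hx (-(b i)) (by
        rw [Finset.mem_union]; exact Or.inr (Finset.mem_image.mpr ⟨i, Finset.mem_univ i, rfl⟩))
      rw [inner_neg_left] at h2
      linarith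
    have : (innerSL ℝ x).toLinearMap = (0 : V →ₗ[ℝ] ℝ) := by
      apply b.ext
      intro i
      simp only [LinearMap.zero_apply, ContinuousLinearMap.coe_coe, innerSL_apply_apply]
      rw [real_inner_comm]
      exact hker i
    have hxx : ⟪x, x⟫ = 0 := by
      have := congrArg (fun f => f x) this
      simpa using this
    simpa using inner_self_eq_zero.mp hxx

lemma max_sub_max_neg (r : ℝ) : max r 0 - max (-r) 0 = r := by
  rcases le_total r 0 with h | h
  · rw [max_eq_right h, max_eq_left (by linarith)]; ring
  · rw [max_eq_left h, max_eq_right (by linarith)]; ring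

lemma exists_fgCone_univ [FiniteDimensional ℝ V] :
    ∃ t : Finset V, (Set.univ : Set V) = fgCone t := by
  classical
  set b := Module.finBasis ℝ V with hb
  refine ⟨(Finset.univ.image b) ∪ (Finset.univ.image (fun i => -(b i))), ?_⟩
  apply Set.Subset.antisymm
  · intro x _
    have hrepr : x = ∑ i, (b.repr x i) • b i := (b.sum_repr x).symm
    rw [hrepr]
    apply sum_mem_fgCone
    intro i _
    have : (b.repr x i) • b i = (max (b.repr x i) 0) • b i + (max (-(b.repr x i)) 0) • (-(b i)) := by
      rw [smul_neg, ← sub_eq_add_neg, ← sub_smul, max_sub_max_neg]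
    rw [this]
    apply add_mem_fgCone
    · exact smul_mem_fgCone (le_max_right _ _) (mem_fgCone_of_mem (by
        rw [Finset.mem_union]; exact Or.inl (Finset.mem_image.mpr ⟨i, Finset.mem_univ i, rfl⟩)))
    · exact smul_mem_fgCone (le_max_right _ _) (mem_fgCone_of_mem (by
        rw [Finset.mem_union]; exact Or.inr (Finset.mem_image.mpr ⟨i, Finset.mem_univ i, rfl⟩)))
  · exact fun x _ => Set.mem_univ x

/-- Weyl: every finitely generated cone is an H-cone. -/
theorem exists_hCone_eq_fgCone [FiniteDimensional ℝ V] (t : Finset V) :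
    ∃ s : Finset V, fgCone t = hCone s := by
  classical
  induction t using Finset.induction with
  | empty =>
    obtain ⟨s, hs⟩ := exists_hCone_singleton_zero (V := V)
    refine ⟨s, ?_⟩
    rw [← hs]
    apply Set.Subset.antisymm
    · rintro x ⟨c, hc, rfl⟩; simp
    · rintro x rfl; exact zero_mem_fgCone _
  | @insert v t hv ih =>
    obtain ⟨s, hs⟩ := ih
    refine ⟨rayGens v s, ?_⟩
    rw [fgCone_insert hv, ← hCone_add_ray]
    ext x
    simp [hs]

/-- Minkowski: every H-cone is finitely generated. -/
theorem exists_fgCone_eq_hCone [FiniteDimensional ℝ V] (s : Finset V) :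
    ∃ t : Finset V, hCone s = fgCone t := by
  classical
  induction s using Finset.induction with
  | empty =>
    obtain ⟨t, ht⟩ := exists_fgCone_univ (V := V)
    refine ⟨t, ?_⟩
    rw [← ht]
    apply Set.Subset.antisymm
    · exact fun x _ => Set.mem_univ x
    · intro x _; intro u hu; exact absurd hu (Finset.notMem_empty u)
  | @insert u s hu ih =>
    obtain ⟨t, ht⟩ := ih
    refine ⟨cutGens u t, ?_⟩
    rw [← fgCone_inter_halfspace, ← ht]
    ext x
    constructor
    · intro hx
      exact ⟨fun w hw => hx w (Finset.mem_insert_of_mem hw), hx u (Finset.mem_insert_self u s)⟩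
    · rintro ⟨h1, h2⟩
      intro w hw
      rcases Finset.mem_insert.mp hw with rfl | hw
      · exact h2
      · exact h1 w hw

lemma convex_hCone (s : Finset V) : Convex ℝ (hCone s) := by
  intro x hx y hy a b ha hb hab
  intro u hu
  have h1 := hx u hu
  have h2 := hy u hu
  rw [inner_add_right, real_inner_smul_right, real_inner_smul_right]
  nlinarith

lemma hCone_antitone {s s' : Finset V} (h : s ⊆ s') : hCone s' ⊆ hCone s :=
  fun x hx u hu => hx u (h hu)


lemma hCone_add_mem {s : Finset V} {x y : V} (hx : x ∈ hCone s) (hy : y ∈ hCone s) :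
    x + y ∈ hCone s := by
  intro u hu
  rw [inner_add_right]
  exact add_nonpos (hx u hu) (hy u hu)

lemma hCone_smul_mem {s : Finset V} {x : V} {a : ℝ} (ha : 0 ≤ a) (hx : x ∈ hCone s) :
    a • x ∈ hCone s := by
  intro u hu
  rw [real_inner_smul_right]
  exact mul_nonpos_iff.mpr (Or.inl ⟨ha, hx u hu⟩)

lemma zero_mem_hCone {V : Type*} [NormedAddCommGroup V] [InnerProductSpace ℝ V] (s : Finset V) :
    (0 : V) ∈ hCone s := fun u _ => by rw [inner_zero_right]


lemma hCone_empty {V : Type*} [NormedAddCommGroup V] [InnerProductSpace ℝ V] :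
    hCone (∅ : Finset V) = Set.univ := by
  ext x; simp [hCone]


end Cones

lemma finset_sum_list_sum {α β : Type*} (s : Finset α) (L : List β) (f : α → β → ℝ) :
    ∑ a ∈ s, (L.map (f a)).sum = (L.map (fun b => ∑ a ∈ s, f a b)).sum := by
  induction L with
  | nil => simp
  | cons b L ih => simp [List.map_cons, List.sum_cons, Finset.sum_add_distrib, ih]


-- E n instantiation
lemma isPolyhedralCone_hCone {n : ℕ} (s : Finset (E n)) : IsPolyhedralCone (hCone s) := ⟨s, rfl⟩

lemma isPolyhedralCone_fgCone {n : ℕ} (t : Finset (E n)) : IsPolyhedralCone (fgCone t) := by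
  obtain ⟨s, hs⟩ := exists_hCone_eq_fgCone t
  exact ⟨s, hs⟩

lemma polarDual_fgCone {n : ℕ} (t : Finset (E n)) : polarDual (fgCone t) = hCone t := by
  apply Set.Subset.antisymm
  · intro u hu w hw
    rw [real_inner_comm]
    exact hu w (mem_fgCone_of_mem hw)
  · rintro u hu y ⟨c, hc, rfl⟩
    rw [inner_sum_smul]
    apply Finset.sum_nonpos
    intro w hw
    exact mul_nonpos_iff.mpr (Or.inl ⟨hc w, real_inner_comm w u ▸ hu w hw⟩)

lemma mem_Tan_iff {n : ℕ} {P : Set (E n)} (hP : Convex ℝ P) {x : E n} (hx : x ∈ P) (v : E n) :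
    v ∈ Tan P x ↔ ∃ l : ℝ, 0 < l ∧ x + l • v ∈ P := by
  constructor
  · rintro ⟨l, hl, hseg⟩
    exact ⟨l, hl, hseg (right_mem_segment ℝ x (x + l • v))⟩
  · rintro ⟨l, hl, hm⟩
    exact ⟨l, hl, hP.segment_subset hx hm⟩

lemma Tan_convexHull {n : ℕ} (s : Finset (E n)) {x : E n} (hx : x ∈ convexHull ℝ (s : Set (E n))) :
    Tan (convexHull ℝ (s : Set (E n))) x = fgCone (s.image (fun q => q - x)) := by
  classical
  ext v
  rw [mem_Tan_iff (convex_convexHull ℝ _) hx]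
  constructor
  · rintro ⟨l, hl, hm⟩
    rw [Finset.convexHull_eq] at hm
    obtain ⟨w, hw0, hw1, hwc⟩ := hm
    rw [Finset.centerMass_eq_of_sum_1 _ _ hw1] at hwc
    simp only [id] at hwc
    -- x + l • v = ∑ w q • q
    refine ⟨fun d => max (w (d + x) / l) 0, fun d => le_max_right _ _, ?_⟩
    rw [Finset.sum_image (by intro p _ q _ h; exact sub_left_injective h)]
    have key : ∀ q ∈ s, (max (w (q - x + x) / l) 0) • (q - x) = (w q / l) • (q - x) := by
      intro q hq
      rw [sub_add_cancel, max_eq_left (div_nonneg (hw0 q hq) (le_of_lt hl))]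
    rw [Finset.sum_congr rfl key]
    have hsum : ∑ q ∈ s, (w q / l) • (q - x) = l⁻¹ • ∑ q ∈ s, w q • (q - x) := by
      rw [Finset.smul_sum]
      exact Finset.sum_congr rfl fun q _ => by rw [smul_smul, div_eq_inv_mul]
    have hsum2 : ∑ q ∈ s, w q • (q - x) = (∑ q ∈ s, w q • q) - x := by
      have : ∑ q ∈ s, w q • (q - x) = (∑ q ∈ s, w q • q) - (∑ q ∈ s, w q) • x := by
        rw [Finset.sum_smul, ← Finset.sum_sub_distrib]
        exact Finset.sum_congr rfl fun q _ => by rw [smul_sub]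
      rw [this, hw1, one_smul]
    rw [hsum, hsum2, hwc, add_sub_cancel_left, smul_smul, inv_mul_cancel₀ (ne_of_gt hl), one_smul]
  · rintro ⟨c, hc, hv⟩
    rw [Finset.sum_image (by intro p _ q _ h; exact sub_left_injective h)] at hv
    set T := ∑ q ∈ s, c (q - x) with hT
    have hT0 : 0 ≤ T := Finset.sum_nonneg fun q _ => hc _
    rcases eq_or_lt_of_le hT0 with hT0' | hTpos
    · -- all coefficients zero, v = 0
      have : ∀ q ∈ s, c (q - x) = 0 := by
        intro q hq
        have := (Finset.sum_eq_zero_iff_of_nonneg (fun q _ => hc _)).mp hT0'.symm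
        exact this q hq
      have hv0 : v = 0 := by
        rw [hv, Finset.sum_congr rfl (fun q hq => by rw [this q hq, zero_smul])]
        simp
      exact ⟨1, one_pos, by rw [hv0, smul_zero, add_zero]; exact hx⟩
    · refine ⟨T⁻¹, inv_pos.mpr hTpos, ?_⟩
      have : x + T⁻¹ • v = ∑ q ∈ s, (c (q - x) / T) • q := by
        rw [hv, Finset.smul_sum]
        have e1 : ∀ q ∈ s, T⁻¹ • c (q - x) • (q - x) = (c (q - x) / T) • q - (c (q - x) / T) • x := by
          intro q _
          rw [smul_smul, smul_sub, div_eq_inv_mul]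
        rw [Finset.sum_congr rfl e1, Finset.sum_sub_distrib]
        have e2 : ∑ q ∈ s, (c (q - x) / T) • x = (∑ q ∈ s, c (q - x) / T) • x := by
          rw [Finset.sum_smul]
        rw [e2, ← Finset.sum_div, ← hT, div_self (ne_of_gt hTpos), one_smul]
        abel
      rw [this]
      have : ∑ q ∈ s, (c (q - x) / T) • q = s.centerMass (fun q => c (q - x) / T) id := by
        rw [Finset.centerMass_eq_of_sum_1]
        · simp only [id]
        · rw [← Finset.sum_div, ← hT, div_self (ne_of_gt hTpos)]
      rw [this]
      apply Finset.centerMass_mem_convexHull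
      · exact fun q _ => div_nonneg (hc _) hT0
      · rw [← Finset.sum_div, ← hT, div_self (ne_of_gt hTpos)]; norm_num
      · exact fun q hq => by simp only [id]; exact Finset.mem_coe.mpr hq

-- simplicity helper
lemma phi_eq_zero_of_perp {n : ℕ} {φ : Set (E n) → ℝ} (hsimple : IsSimple φ)
    {C : Set (E n)} (hC : IsPolyhedralCone C) {w : E n} (hw : w ≠ 0)
    (h : ∀ x ∈ C, ⟪w, x⟫ = 0) : φ C = 0 := by
  apply hsimple C hC
  have hle : Submodule.span ℝ C ≤ (Submodule.span ℝ {w})ᗮ := by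
    rw [Submodule.span_le]
    intro x hx
    rw [SetLike.mem_coe, Submodule.mem_orthogonal]
    intro u hu
    obtain ⟨a, rfl⟩ := Submodule.mem_span_singleton.mp hu
    rw [real_inner_smul_left, h x hx, mul_zero]
  have h1 : Module.finrank ℝ (Submodule.span ℝ ({w} : Set (E n))) = 1 :=
    finrank_span_singleton hw
  have h2 := Submodule.finrank_add_finrank_orthogonal (𝕜 := ℝ) (Submodule.span ℝ ({w} : Set (E n)))
  rw [h1, finrank_euclideanSpace_fin] at h2
  have h3 : coneDim C ≤ Module.finrank ℝ ((Submodule.span ℝ ({w} : Set (E n)))ᗮ) :=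
    Submodule.finrank_mono hle
  omega

lemma cut_phi {n : ℕ} {φ : Set (E n) → ℝ} (hφ : IsConeValuation φ) (hsimple : IsSimple φ)
    (s : Finset (E n)) {w : E n} (hw : w ≠ 0) :
    φ (hCone s) = φ (hCone (insert w s)) + φ (hCone (insert (-w) s)) := by
  classical
  have hunion : hCone (insert w s) ∪ hCone (insert (-w) s) = hCone s := by
    apply Set.Subset.antisymm
    · rintro x (hx | hx) <;> exact fun u hu => hx u (Finset.mem_insert_of_mem hu)
    · intro x hx
      rcases le_total (⟪w, x⟫ : ℝ) 0 with h | h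
      · left
        intro u hu
        rcases Finset.mem_insert.mp hu with rfl | hu
        · exact h
        · exact hx u hu
      · right
        intro u hu
        rcases Finset.mem_insert.mp hu with rfl | hu
        · rw [inner_neg_left]; linarith
        · exact hx u hu
  have hinter : hCone (insert w s) ∩ hCone (insert (-w) s) = hCone (insert w (insert (-w) s)) := by
    apply Set.Subset.antisymm
    · rintro x ⟨h1, h2⟩
      intro u hu
      rcases Finset.mem_insert.mp hu with rfl | hu
      · exact h1 u (Finset.mem_insert_self _ _)
      · exact h2 u hu
    · intro x hx
      constructor
      · intro u hu
        rcases Finset.mem_insert.mp hu with rfl | hu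
        · exact hx u (Finset.mem_insert_self _ _)
        · exact hx u (Finset.mem_insert_of_mem (Finset.mem_insert_of_mem hu))
      · exact fun u hu => hx u (Finset.mem_insert_of_mem hu)
  have hzero : φ (hCone (insert w (insert (-w) s))) = 0 := by
    apply phi_eq_zero_of_perp hsimple (isPolyhedralCone_hCone _) hw
    intro x hx
    have h1 := hx w (Finset.mem_insert_self _ _)
    have h2 := hx (-w) (Finset.mem_insert_of_mem (Finset.mem_insert_self _ _))
    rw [inner_neg_left] at h2
    linarith
  have := hφ (hCone (insert w s)) (hCone (insert (-w) s))
    (isPolyhedralCone_hCone _) (isPolyhedralCone_hCone _)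
    (by rw [hunion]; exact isPolyhedralCone_hCone s)
  rw [hunion, hinter, hzero] at this
  linarith

-- sign cells over a list of vectors
def cells {n : ℕ} : List (E n) → List (Finset (E n))
  | [] => [∅]
  | w :: L => (cells L).map (insert w) ++ (cells L).map (insert (-w))

lemma list_sum_map_add {α : Type*} (l : List α) (f g : α → ℝ) :
    (l.map (fun x => f x + g x)).sum = (l.map f).sum + (l.map g).sum := by
  induction l with
  | nil => simp
  | cons a l ih => simp [ih]; ring

lemma cells_sum {n : ℕ} {φ : Set (E n) → ℝ} (hφ : IsConeValuation φ) (hsimple : IsSimple φ) :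
    ∀ (L : List (E n)), (∀ w ∈ L, w ≠ 0) → ∀ s : Finset (E n),
      ((cells L).map (fun c => φ (hCone (s ∪ c)))).sum = φ (hCone s) := by
  intro L
  induction L with
  | nil => intro _ s; simp [cells]
  | cons w L ih =>
    intro hL s
    have hw : w ≠ 0 := hL w (List.mem_cons_self)
    have hL' : ∀ u ∈ L, u ≠ (0 : E n) := fun u hu => hL u (List.mem_cons_of_mem w hu)
    rw [cells, List.map_append, List.sum_append, List.map_map, List.map_map]
    have e1 : ((cells L).map ((fun c => φ (hCone (s ∪ c))) ∘ insert w)).sum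
        = ((cells L).map (fun c => φ (hCone (insert w (s ∪ c))))).sum := by
      congr 1
      apply List.map_congr_left
      intro c _
      simp only [Function.comp]
      rw [Finset.union_insert]
    have e2 : ((cells L).map ((fun c => φ (hCone (s ∪ c))) ∘ insert (-w))).sum
        = ((cells L).map (fun c => φ (hCone (insert (-w) (s ∪ c))))).sum := by
      congr 1
      apply List.map_congr_left
      intro c _
      simp only [Function.comp]
      rw [Finset.union_insert]
    rw [e1, e2, ← list_sum_map_add]
    have e3 : ((cells L).map (fun c => φ (hCone (insert w (s ∪ c))) +
        φ (hCone (insert (-w) (s ∪ c))))).sum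
        = ((cells L).map (fun c => φ (hCone (s ∪ c)))).sum := by
      congr 1
      apply List.map_congr_left
      intro c _
      exact (cut_phi hφ hsimple (s ∪ c) hw).symm
    rw [e3]
    exact ih hL' s

lemma cells_sign {n : ℕ} :
    ∀ {L : List (E n)} {c : Finset (E n)}, c ∈ cells L → ∀ w ∈ L, w ∈ c ∨ -w ∈ c := by
  intro L
  induction L with
  | nil => intro c _ w hw; exact absurd hw List.not_mem_nil
  | cons u L ih =>
    intro c hc w hw
    rw [cells, List.mem_append, List.mem_map, List.mem_map] at hc
    have hmem : ∃ c' ∈ cells L, c = insert u c' ∨ c = insert (-u) c' := by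
      rcases hc with ⟨c', h1, h2⟩ | ⟨c', h1, h2⟩
      · exact ⟨c', h1, Or.inl h2.symm⟩
      · exact ⟨c', h1, Or.inr h2.symm⟩
    obtain ⟨c', hc', hmem⟩ := hmem
    rcases List.mem_cons.mp hw with rfl | hw
    · rcases hmem with rfl | rfl
      · exact Or.inl (Finset.mem_insert_self _ _)
      · exact Or.inr (Finset.mem_insert_self _ _)
    · rcases ih hc' w hw with h | h
      · rcases hmem with rfl | rfl <;> exact Or.inl (Finset.mem_insert_of_mem h)
      · rcases hmem with rfl | rfl <;> exact Or.inr (Finset.mem_insert_of_mem h)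

lemma cell_vertex_sum {n : ℕ} {φ : Set (E n) → ℝ} (hφ : IsConeValuation φ)
    (hsimple : IsSimple φ) (s : Finset (E n)) (hs : s.Nonempty) (c : Finset (E n))
    (hc : ∀ p ∈ s, ∀ q ∈ s, p ≠ q → (p - q) ∈ c ∨ (q - p) ∈ c) :
    ∑ v ∈ s, φ (hCone ((s.image (fun q => q - v)) ∪ c)) = φ (hCone c) := by
  classical
  by_cases hdeg : ∃ p ∈ s, ∃ q ∈ s, p ≠ q ∧ (p - q) ∈ c ∧ (q - p) ∈ c
  · obtain ⟨p, hp, q, hq, hpq, h1, h2⟩ := hdeg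
    have hz : ∀ X : Finset (E n), c ⊆ X → φ (hCone X) = 0 := by
      intro X hX
      apply phi_eq_zero_of_perp hsimple (isPolyhedralCone_hCone X) (sub_ne_zero.mpr hpq)
      intro x hx
      have e1 := hx _ (hX h1)
      have e2 := hx _ (hX h2)
      rw [show q - p = -(p - q) by rw [neg_sub]] at e2
      rw [inner_neg_left] at e2
      linarith
    rw [hz c (subset_refl c)]
    exact Finset.sum_eq_zero fun v _ => hz _ Finset.subset_union_right
  · push_neg at hdeg
    by_cases hmax : ∃ v ∈ s, ∀ q ∈ s, q ≠ v → (q - v) ∈ c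
    · obtain ⟨v₀, hv₀, hvmax⟩ := hmax
      rw [Finset.sum_eq_single_of_mem v₀ hv₀ ?_]
      · congr 1
        apply Set.Subset.antisymm (hCone_antitone Finset.subset_union_right)
        intro x hx u hu
        rcases Finset.mem_union.mp hu with hu | hu
        · obtain ⟨q, hq, rfl⟩ := Finset.mem_image.mp hu
          by_cases hqv : q = v₀
          · subst hqv; rw [sub_self, inner_zero_left]
          · exact hx _ (hvmax q hq hqv)
        · exact hx u hu
      · intro v hv hne
        have hex : ∃ q ∈ s, q ≠ v ∧ (q - v) ∉ c := by
          by_contra hno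
          push_neg at hno
          exact hdeg v₀ hv₀ v hv (fun h => hne h.symm)
            (hno v₀ hv₀ (fun h => hne h.symm)) (hvmax v hv hne)
        obtain ⟨q, hq, hqv, hqc⟩ := hex
        have hvq : (v - q) ∈ c := (hc v hv q hq (Ne.symm hqv)).resolve_right hqc
        apply phi_eq_zero_of_perp hsimple (isPolyhedralCone_hCone _) (sub_ne_zero.mpr hqv)
        intro x hx
        have e1 : ⟪q - v, x⟫ ≤ 0 := hx _ (Finset.mem_union_left _
          (Finset.mem_image.mpr ⟨q, hq, rfl⟩))
        have e2 : ⟪v - q, x⟫ ≤ 0 := hx _ (Finset.mem_union_right _ hvq)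
        rw [show v - q = -(q - v) by rw [neg_sub]] at e2
        rw [inner_neg_left] at e2
        linarith
    · push_neg at hmax
      have hstep : ∀ v ∈ s, ∃ q ∈ s, q ≠ v ∧ (v - q) ∈ c := by
        intro v hv
        obtain ⟨q, hq, hqv, hqc⟩ := hmax v hv
        exact ⟨q, hq, hqv, (hc v hv q hq (Ne.symm hqv)).resolve_right hqc⟩
      obtain ⟨v₀, hv₀⟩ := hs
      choose f hf1 hf2 hf3 using hstep
      let g : ℕ → {x // x ∈ s} := fun k =>
        Nat.rec (motive := fun _ => {x // x ∈ s}) ⟨v₀, hv₀⟩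
          (fun _ p => ⟨f p.1 p.2, hf1 p.1 p.2⟩) k
      have hgstep : ∀ k : ℕ, ((g k).1 - (g (k+1)).1) ∈ c ∧ (g (k+1)).1 ≠ (g k).1 := by
        intro k
        exact ⟨hf3 (g k).1 (g k).2, hf2 (g k).1 (g k).2⟩
      have key : ∀ i j : ℕ, i < j → g i = g j →
          ∀ x ∈ hCone c, ⟪(g i).1 - (g (i+1)).1, x⟫ = 0 := by
        intro i j hlt heq x hx
        have hterm : ∀ k : ℕ, ⟪(g k).1 - (g (k+1)).1, x⟫ ≤ 0 := fun k => hx _ (hgstep k).1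
        have hm0 : 0 < j - i := by omega
        have htel : ∑ k ∈ Finset.range (j - i), ⟪(g (i+k)).1 - (g (i+k+1)).1, x⟫ = 0 := by
          have hre : ∀ k ∈ Finset.range (j - i), ⟪(g (i+k)).1 - (g (i+k+1)).1, x⟫
              = (fun t => (⟪(g (i+t)).1, x⟫ : ℝ)) k - (fun t => (⟪(g (i+t)).1, x⟫ : ℝ)) (k+1) := by
            intro k _
            rw [inner_sub_left]
            exact rfl
          rw [Finset.sum_congr rfl hre, Finset.sum_range_sub']
          show (⟪(g (i+0)).1, x⟫ : ℝ) - ⟪(g (i + (j - i))).1, x⟫ = 0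
          have hji : i + (j - i) = j := by omega
          rw [hji, show i + 0 = i from rfl, heq, sub_self]
        have hall := (Finset.sum_eq_zero_iff_of_nonpos
          (fun k _ => hterm (i+k))).mp htel
        have h0 := hall 0 (Finset.mem_range.mpr hm0)
        simpa using h0
      obtain ⟨i, j, hij, hgij⟩ := Finite.exists_ne_map_eq_of_infinite g
      have hd : (g i).1 - (g (i+1)).1 ≠ 0 ∨ (g j).1 - (g (j+1)).1 ≠ 0 :=
        Or.inl (sub_ne_zero.mpr (Ne.symm (hgstep i).2))
      have hperp : ∃ d : E n, d ≠ 0 ∧ ∀ x ∈ hCone c, ⟪d, x⟫ = 0 := by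
        rcases lt_or_gt_of_ne hij with hlt | hgt
        · exact ⟨_, sub_ne_zero.mpr (Ne.symm (hgstep i).2), key i j hlt hgij⟩
        · exact ⟨_, sub_ne_zero.mpr (Ne.symm (hgstep j).2), key j i hgt hgij.symm⟩
      obtain ⟨d, hd0, hdperp⟩ := hperp
      have hzero : φ (hCone c) = 0 :=
        phi_eq_zero_of_perp hsimple (isPolyhedralCone_hCone c) hd0 hdperp
      rw [hzero]
      apply Finset.sum_eq_zero
      intro v _
      apply phi_eq_zero_of_perp hsimple (isPolyhedralCone_hCone _) hd0
      intro x hx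
      exact hdperp x (hCone_antitone Finset.subset_union_right hx)

lemma sum_normal_phi {n : ℕ} {φ : Set (E n) → ℝ} (hφ : IsConeValuation φ)
    (hsimple : IsSimple φ) (hnorm : φ (Set.univ : Set (E n)) = 1)
    (s : Finset (E n)) (hs : s.Nonempty) :
    ∑ v ∈ s, φ (hCone (s.image (fun q => q - v))) = 1 := by
  classical
  set L : List (E n) := (((s ×ˢ s).filter (fun pq => pq.1 ≠ pq.2)).toList).map
    (fun pq => pq.1 - pq.2) with hL
  have hLne : ∀ w ∈ L, w ≠ (0 : E n) := by
    intro w hw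
    rw [hL, List.mem_map] at hw
    obtain ⟨pq, hpq, rfl⟩ := hw
    rw [Finset.mem_toList, Finset.mem_filter] at hpq
    exact sub_ne_zero.mpr hpq.2
  have hmemL : ∀ p ∈ s, ∀ q ∈ s, p ≠ q → (p - q) ∈ L := by
    intro p hp q hq hpq
    rw [hL, List.mem_map]
    refine ⟨(p, q), ?_, rfl⟩
    rw [Finset.mem_toList, Finset.mem_filter, Finset.mem_product]
    exact ⟨⟨hp, hq⟩, hpq⟩
  have e1 : ∀ v ∈ s, φ (hCone (s.image (fun q => q - v)))
      = ((cells L).map (fun c => φ (hCone ((s.image (fun q => q - v)) ∪ c)))).sum :=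
    fun v _ => (cells_sum hφ hsimple L hLne _).symm
  rw [Finset.sum_congr rfl e1, finset_sum_list_sum]
  have e2 : ∀ c ∈ cells L, ∑ v ∈ s, φ (hCone ((s.image (fun q => q - v)) ∪ c))
      = φ (hCone c) := by
    intro c hcell
    apply cell_vertex_sum hφ hsimple s hs c
    intro p hp q hq hpq
    rcases cells_sign hcell (p - q) (hmemL p hp q hq hpq) with h | h
    · exact Or.inl h
    · right; rwa [neg_sub] at h
  rw [List.map_congr_left e2]
  have e3 := cells_sum hφ hsimple L hLne ∅
  simp only [Finset.empty_union] at e3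
  rw [e3, hCone_empty, hnorm]
/-- If the normal cone at `x` spans everything, then `x` is a vertex (element of `s`). -/
lemma mem_of_span_normal_top {n : ℕ} {s : Finset (E n)} {x : E n}
    (hx : x ∈ convexHull ℝ (s : Set (E n)))
    (hspan : Submodule.span ℝ (hCone (s.image (fun q => q - x))) = ⊤) : x ∈ s := by
  classical
  set N : Set (E n) := hCone (s.image (fun q => q - x)) with hN
  have hNconv : Convex ℝ N := convex_hCone _
  have hN0 : (0 : E n) ∈ N := zero_mem_hCone _
  -- find an interior point of N
  obtain ⟨b, hbsub, hbspan, hbli⟩ := exists_linearIndependent ℝ N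
  rw [hspan] at hbspan
  have hbfin : b.Finite := hbli.setFinite
  have : Fintype b := hbfin.fintype
  set B : Module.Basis b ℝ (E n) := Module.Basis.mk hbli (by rw [Subtype.range_val, hbspan]) with hB
  have hBmem : ∀ i : b, (B i : E n) ∈ N := by
    intro i
    rw [hB, Module.Basis.mk_apply]
    exact hbsub i.2
  set m : ℕ := Fintype.card b with hm
  set u : E n := B.equivFun.symm (fun _ => 1 / (m + 1)) with hu
  -- an open neighborhood of u inside N
  set O : Set (E n) := {y | (∀ i : b, 0 < B.equivFun y i) ∧ ∑ i : b, B.equivFun y i < 1}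
    with hO
  have husub : ∀ y ∈ O, y ∈ N := by
    rintro y ⟨h1, h2⟩
    have hy : y = ∑ i : b, B.equivFun y i • (B i : E n) := (B.sum_equivFun y).symm
    rw [hy]
    -- convex combination with slack, using 0 ∈ N
    have := hNconv.sum_mem (t := (Finset.univ : Finset (Option b)))
      (w := fun o => Option.elim o (1 - ∑ i : b, B.equivFun y i) (fun i => B.equivFun y i))
      (z := fun o => Option.elim o 0 (fun i => (B i : E n))) ?_ ?_ ?_
    · rw [Fintype.sum_option] at this
      simpa using this
    · intro o _
      cases o with
      | none => simp only [Option.elim]; linarith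
      | some i => simp only [Option.elim]; exact le_of_lt (h1 i)
    · rw [Fintype.sum_option]
      simp only [Option.elim]
      ring
    · intro o _
      cases o with
      | none => exact hN0
      | some i => exact hBmem i
  have hOopen : IsOpen O := by
    have hcont : Continuous (fun y => B.equivFun y) := LinearMap.continuous_of_finiteDimensional _
    have h1 : IsOpen {y : E n | ∀ i : b, 0 < B.equivFun y i} := by
      have : {y : E n | ∀ i : b, 0 < B.equivFun y i} = ⋂ i : b, {y | 0 < B.equivFun y i} := by
        ext y; simp
      rw [this]
      apply isOpen_iInter_of_finite
      intro i
      exact isOpen_lt continuous_const ((continuous_apply i).comp hcont)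
    have h2 : IsOpen {y : E n | ∑ i : b, B.equivFun y i < 1} := by
      apply isOpen_lt _ continuous_const
      exact continuous_finset_sum _ fun i _ => (continuous_apply i).comp hcont
    exact h1.inter h2
  have huO : u ∈ O := by
    constructor
    · intro i
      rw [hu]
      rw [B.equivFun.apply_symm_apply]
      positivity
    · rw [hu]
      rw [B.equivFun.apply_symm_apply]
      rw [Finset.sum_const, Finset.card_univ, ← hm, nsmul_eq_mul]
      rw [mul_one_div]
      rw [div_lt_one (by positivity)]
      linarith
  have huint : u ∈ interior N := by
    rw [mem_interior]
    exact ⟨O, husub, hOopen, huO⟩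
  -- u strictly exposes x
  have hexp : ∀ q ∈ s, q ≠ x → ⟪u, q - x⟫ < 0 := by
    intro q hq hqx
    have hle : ⟪u, q - x⟫ ≤ 0 := by
      have h0 := interior_subset huint _ (Finset.mem_image.mpr ⟨q, hq, rfl⟩)
      rwa [real_inner_comm] at h0
    rcases lt_or_eq_of_le hle with h | h
    · exact h
    · exfalso
      obtain ⟨δ, hδ, hball⟩ := Metric.isOpen_iff.mp isOpen_interior u huint
      set εv : ℝ := δ / (2 * ‖q - x‖ + 1) with hε
      have hqx0 : q - x ≠ 0 := sub_ne_zero.mpr hqx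
      have hnorm : 0 < ‖q - x‖ := norm_pos_iff.mpr hqx0
      have hεpos : 0 < εv := by positivity
      have hmem : u + εv • (q - x) ∈ N := by
        apply interior_subset
        apply hball
        rw [Metric.mem_ball, dist_eq_norm]
        have : u + εv • (q - x) - u = εv • (q - x) := by abel
        rw [this, norm_smul, Real.norm_eq_abs, abs_of_pos hεpos, hε]
        rw [div_mul_eq_mul_div, div_lt_iff₀ (by positivity)]
        nlinarith
      have hcontr := hmem _ (Finset.mem_image.mpr ⟨q, hq, rfl⟩)
      rw [inner_add_right, real_inner_smul_right] at hcontr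
      have hcomm : ⟪q - x, u⟫ = (0 : ℝ) := by rw [real_inner_comm]; exact h
      have hsq : ⟪q - x, q - x⟫ = ‖q - x‖ ^ 2 := real_inner_self_eq_norm_sq _
      nlinarith [hcontr, hsq, hcomm, pow_pos hnorm 2, mul_pos hεpos (pow_pos hnorm 2)]
  -- conclude x ∈ s
  by_contra hxs
  rw [Finset.convexHull_eq] at hx
  obtain ⟨w, hw0, hw1, hwc⟩ := hx
  rw [Finset.centerMass_eq_of_sum_1 _ _ hw1] at hwc
  simp only [id] at hwc
  have hzero : ∑ q ∈ s, w q * ⟪u, q - x⟫ = 0 := by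
    have : ∑ q ∈ s, w q * ⟪u, q - x⟫ = ⟪u, ∑ q ∈ s, w q • (q - x)⟫ := by
      rw [inner_sum]
      exact Finset.sum_congr rfl fun q _ => (real_inner_smul_right u (q - x) (w q)).symm
    rw [this]
    have e : ∑ q ∈ s, w q • (q - x) = (∑ q ∈ s, w q • q) - x := by
      have h1 : ∑ q ∈ s, w q • (q - x) = (∑ q ∈ s, w q • q) - (∑ q ∈ s, w q) • x := by
        rw [Finset.sum_smul, ← Finset.sum_sub_distrib]
        exact Finset.sum_congr rfl fun q _ => by rw [smul_sub]
      rw [h1, hw1, one_smul]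
    rw [e, hwc, sub_self, inner_zero_right]
  have hterms : ∀ q ∈ s, w q * ⟪u, q - x⟫ ≤ 0 := by
    intro q hq
    have hqx : q ≠ x := fun h => hxs (h ▸ hq)
    exact mul_nonpos_iff.mpr (Or.inl ⟨hw0 q hq, le_of_lt (hexp q hq hqx)⟩)
  have hallzero := (Finset.sum_eq_zero_iff_of_nonpos hterms).mp hzero
  -- some weight is positive
  have : ∃ q ∈ s, 0 < w q := by
    by_contra hno
    push_neg at hno
    have : ∑ q ∈ s, w q = 0 :=
      le_antisymm (Finset.sum_nonpos hno) (Finset.sum_nonneg hw0)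
    rw [hw1] at this
    norm_num at this
  obtain ⟨q, hq, hwq⟩ := this
  have hqx : q ≠ x := fun h => hxs (h ▸ hq)
  have := hallzero q hq
  have hlt := hexp q hq hqx
  nlinarith
def lift {n : ℕ} (x : E n) (t : ℝ) : E (n+1) := WithLp.toLp 2 (Fin.snoc (WithLp.ofLp x) t)

def initV {n : ℕ} (u : E (n+1)) : E n := WithLp.toLp 2 (Fin.init (WithLp.ofLp u))

lemma euclid_inner {m : ℕ} (x y : E m) : ⟪x, y⟫ = ∑ i, x i * y i := by
  rw [PiLp.inner_apply]
  apply Finset.sum_congr rfl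
  intro i _
  rw [RCLike.inner_apply]
  simp [mul_comm]

lemma lift_inner {n : ℕ} (a x : E n) (b t : ℝ) :
    ⟪lift a b, lift x t⟫ = ⟪a, x⟫ + b * t := by
  rw [euclid_inner, euclid_inner, Fin.sum_univ_castSucc]
  simp [lift]

lemma lift_eta {n : ℕ} (u : E (n+1)) : lift (initV u) (u (Fin.last n)) = u := by
  simp [lift, initV, Fin.snoc_init_self]

lemma lift_last {n : ℕ} (x : E n) (t : ℝ) : lift x t (Fin.last n) = t := by
  simp [lift]

lemma lift_init {n : ℕ} (x : E n) (t : ℝ) : initV (lift x t) = x := by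
  simp [initV, lift]

lemma lift_add {n : ℕ} (x y : E n) (s t : ℝ) :
    lift x s + lift y t = lift (x + y) (s + t) := by
  ext i
  cases i using Fin.lastCases with
  | last => simp [lift]
  | cast i => simp [lift]

lemma lift_smul {n : ℕ} (a : ℝ) (x : E n) (t : ℝ) :
    a • lift x t = lift (a • x) (a * t) := by
  ext i
  cases i using Fin.lastCases with
  | last => simp [lift]
  | cast i => simp [lift]

lemma lift_zero {n : ℕ} : lift (0 : E n) 0 = 0 := by
  ext i
  cases i using Fin.lastCases with
  | last => simp [lift]
  | cast i => simp [lift]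

lemma lift_sum {n : ℕ} {ι : Type*} (s : Finset ι) (f : ι → E n) (g : ι → ℝ) (c : ι → ℝ) :
    ∑ i ∈ s, c i • lift (f i) (g i) = lift (∑ i ∈ s, c i • f i) (∑ i ∈ s, c i * g i) := by
  classical
  induction s using Finset.induction with
  | empty => simp [lift_zero]
  | @insert a s ha ih =>
    rw [Finset.sum_insert ha, Finset.sum_insert ha, Finset.sum_insert ha, ih,
      lift_smul, lift_add]

lemma lift_one_injective {n : ℕ} : Function.Injective (fun q : E n => lift q 1) := by
  intro a b h
  have := congrArg initV h
  rwa [lift_init, lift_init] at this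

/-- V-to-H for polytopes via homogenization. -/
lemma polytope_H {n : ℕ} (s : Finset (E n)) :
    ∃ U : Finset (E n × ℝ),
      convexHull ℝ (s : Set (E n)) = {x | ∀ p ∈ U, ⟪p.1, x⟫ + p.2 ≤ 0} := by
  classical
  set tlift : Finset (E (n+1)) := s.image (fun q => lift q 1) with htl
  obtain ⟨s₁, hs₁⟩ := exists_hCone_eq_fgCone tlift
  refine ⟨s₁.image (fun u => (initV u, u (Fin.last n))), ?_⟩
  have claimA : ∀ x : E n, x ∈ convexHull ℝ (s : Set (E n)) ↔ lift x 1 ∈ fgCone tlift := by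
    intro x
    constructor
    · intro hx
      rw [Finset.convexHull_eq] at hx
      obtain ⟨w, hw0, hw1, hwc⟩ := hx
      rw [Finset.centerMass_eq_of_sum_1 _ _ hw1] at hwc
      simp only [id] at hwc
      refine ⟨fun v => max (w (initV v)) 0, fun v => le_max_right _ _, ?_⟩
      rw [htl, Finset.sum_image (fun p _ q _ h => lift_one_injective h)]
      have : ∀ q ∈ s, (max (w (initV (lift q 1))) 0) • lift q 1 = w q • lift q 1 := by
        intro q hq
        rw [lift_init, max_eq_left (hw0 q hq)]
      rw [Finset.sum_congr rfl this, lift_sum]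
      have h1 : ∑ q ∈ s, w q * 1 = 1 := by simp only [mul_one]; exact hw1
      rw [hwc, h1]
    · rintro ⟨c, hc, hsum⟩
      rw [htl, Finset.sum_image (fun p _ q _ h => lift_one_injective h), lift_sum] at hsum
      have hlast : (1 : ℝ) = ∑ q ∈ s, c (lift q 1) * 1 := by
        have h := congrArg (fun z : E (n+1) => z (Fin.last n)) hsum
        simpa [lift_last] using h
      have hinit : x = ∑ q ∈ s, c (lift q 1) • q := by
        have h := congrArg (fun z : E (n+1) => initV z) hsum
        simpa [lift_init] using h
      have hsum1 : ∑ q ∈ s, c (lift q 1) = 1 := by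
        simpa [mul_one] using hlast.symm
      rw [hinit]
      have heq : ∑ q ∈ s, c (lift q 1) • q = s.centerMass (fun q => c (lift q 1)) id := by
        rw [Finset.centerMass_eq_of_sum_1 _ _ hsum1]
        simp only [id]
      rw [heq]
      apply Finset.centerMass_mem_convexHull
      · exact fun q _ => hc _
      · rw [hsum1]; norm_num
      · exact fun q hq => Finset.mem_coe.mpr hq
  ext x
  rw [claimA, hs₁]
  constructor
  · intro hx p hp
    rw [Finset.mem_image] at hp
    obtain ⟨u, hu, rfl⟩ := hp
    have := hx u hu
    rw [← lift_eta u, lift_inner, mul_one] at this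
    exact this
  · intro hx u hu
    have := hx (initV u, u (Fin.last n)) (Finset.mem_image.mpr ⟨u, hu, rfl⟩)
    rw [← lift_eta u, lift_inner, mul_one]
    exact this

/-- bounded nonempty H-polyhedron is a polytope. -/
lemma H_bounded_polytope {n : ℕ} (U : Finset (E n × ℝ))
    (hb : Bornology.IsBounded {x : E n | ∀ p ∈ U, ⟪p.1, x⟫ + p.2 ≤ 0})
    (hne : {x : E n | ∀ p ∈ U, ⟪p.1, x⟫ + p.2 ≤ 0}.Nonempty) :
    IsPolytope {x : E n | ∀ p ∈ U, ⟪p.1, x⟫ + p.2 ≤ 0} := by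
  classical
  set D : Set (E n) := {x | ∀ p ∈ U, ⟪p.1, x⟫ + p.2 ≤ 0} with hD
  set shat : Finset (E (n+1)) := U.image (fun p => lift p.1 p.2) ∪ {lift 0 (-1)} with hshat
  have claim1 : ∀ x : E n, x ∈ D ↔ lift x 1 ∈ hCone shat := by
    intro x
    constructor
    · intro hx u hu
      rw [hshat, Finset.mem_union] at hu
      rcases hu with hu | hu
      · obtain ⟨p, hp, rfl⟩ := Finset.mem_image.mp hu
        rw [lift_inner, mul_one]
        exact hx p hp
      · rw [Finset.mem_singleton] at hu
        subst hu
        rw [lift_inner, inner_zero_left]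
        norm_num
    · intro hx p hp
      have := hx (lift p.1 p.2) (by
        rw [hshat, Finset.mem_union]
        exact Or.inl (Finset.mem_image.mpr ⟨p, hp, rfl⟩))
      rwa [lift_inner, mul_one] at this
  obtain ⟨W, hW⟩ := exists_fgCone_eq_hCone shat
  have hlast : ∀ w ∈ W, 0 ≤ w (Fin.last n) := by
    intro w hw
    have hwm : w ∈ hCone shat := by rw [hW]; exact mem_fgCone_of_mem hw
    have := hwm (lift 0 (-1)) (by
      rw [hshat, Finset.mem_union]; exact Or.inr (Finset.mem_singleton_self _))
    rw [← lift_eta w, lift_inner, inner_zero_left] at this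
    linarith
  obtain ⟨x₀, hx₀⟩ := hne
  have hrec : ∀ w ∈ W, w (Fin.last n) = 0 → w = 0 := by
    intro w hw hwl
    have hwm : w ∈ hCone shat := by rw [hW]; exact mem_fgCone_of_mem hw
    have hmem : ∀ μ : ℝ, 0 ≤ μ → x₀ + μ • initV w ∈ D := by
      intro μ hμ
      rw [claim1]
      have : lift (x₀ + μ • initV w) 1 = lift x₀ 1 + μ • w := by
        rw [← lift_eta w, hwl, lift_smul, lift_add, mul_zero, add_zero, lift_init]
      rw [this]
      exact hCone_add_mem ((claim1 x₀).mp hx₀) (hCone_smul_mem hμ hwm)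
    by_contra hw0
    have hiw : initV w ≠ 0 := by
      intro h
      apply hw0
      rw [← lift_eta w, hwl, h, lift_zero]
    have hnorm : 0 < ‖initV w‖ := norm_pos_iff.mpr hiw
    obtain ⟨r, hr⟩ := hb.subset_closedBall 0
    set μ := (r + ‖x₀‖ + 1) / ‖initV w‖ with hμ
    have hμ0 : 0 ≤ μ := by
      have : 0 ≤ r := by
        have := hr hx₀
        rw [Metric.mem_closedBall, dist_zero_right] at this
        exact le_trans (norm_nonneg _) this
      positivity
    have h1 := hr (hmem μ hμ0)
    rw [Metric.mem_closedBall, dist_zero_right] at h1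
    have h2 : μ * ‖initV w‖ - ‖x₀‖ ≤ ‖x₀ + μ • initV w‖ := by
      have h3 := norm_add_le (-x₀) (x₀ + μ • initV w)
      have h4 : -x₀ + (x₀ + μ • initV w) = μ • initV w := by abel
      rw [h4, norm_neg] at h3
      rw [norm_smul, Real.norm_eq_abs, abs_of_nonneg hμ0] at h3
      linarith
    have h5 : μ * ‖initV w‖ = r + ‖x₀‖ + 1 := by
      rw [hμ, div_mul_cancel₀ _ (ne_of_gt hnorm)]
    linarith
  -- now build the vertex set
  set Wp : Finset (E (n+1)) := W.filter (fun w => w (Fin.last n) ≠ 0) with hWp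
  have hWppos : ∀ w ∈ Wp, 0 < w (Fin.last n) := by
    intro w hw
    rw [hWp, Finset.mem_filter] at hw
    exact lt_of_le_of_ne (hlast w hw.1) (Ne.symm hw.2)
  set Q : Finset (E n) := Wp.image (fun w => (w (Fin.last n))⁻¹ • initV w) with hQ
  -- main set identity
  have hDQ : D = convexHull ℝ (Q : Set (E n)) := by
    apply Set.Subset.antisymm
    · intro x hx
      have hxW : lift x 1 ∈ fgCone W := by rw [← hW]; exact (claim1 x).mp hx
      obtain ⟨c, hc, hsum⟩ := hxW
      have hsplit : lift x 1 = ∑ w ∈ Wp, c w • w := by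
        rw [hsum, ← Finset.sum_filter_add_sum_filter_not W (fun w => w (Fin.last n) ≠ 0)]
        rw [← hWp]
        have : ∑ w ∈ W.filter (fun w => ¬ w (Fin.last n) ≠ 0), c w • w = 0 := by
          apply Finset.sum_eq_zero
          intro w hw
          rw [Finset.mem_filter, not_not] at hw
          rw [hrec w hw.1 hw.2, smul_zero]
        rw [this, add_zero]
      have hwrepr : ∀ w ∈ Wp, (w : E (n+1)) = lift (initV w) (w (Fin.last n)) :=
        fun w _ => (lift_eta w).symm
      have hsum2 : lift x 1 = lift (∑ w ∈ Wp, c w • initV w)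
          (∑ w ∈ Wp, c w * w (Fin.last n)) := by
        rw [hsplit, ← lift_sum Wp initV (fun w => w (Fin.last n)) c]
        apply Finset.sum_congr rfl
        intro w hw
        rw [← hwrepr w hw]
      have hlast1 : (1 : ℝ) = ∑ w ∈ Wp, c w * w (Fin.last n) := by
        have h := congrArg (fun z : E (n+1) => z (Fin.last n)) hsum2
        simpa [lift_last] using h
      have hinit1 : x = ∑ w ∈ Wp, c w • initV w := by
        have h := congrArg (fun z : E (n+1) => initV z) hsum2
        simpa [lift_init] using h
      have hxcm : x = ∑ w ∈ Wp, (c w * w (Fin.last n)) • ((w (Fin.last n))⁻¹ • initV w) := by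
        rw [hinit1]
        apply Finset.sum_congr rfl
        intro w hw
        rw [smul_smul, mul_assoc, mul_inv_cancel₀ (ne_of_gt (hWppos w hw)), mul_one]
      rw [hxcm]
      have : ∑ w ∈ Wp, (c w * w (Fin.last n)) • ((w (Fin.last n))⁻¹ • initV w)
          = Wp.centerMass (fun w => c w * w (Fin.last n))
            (fun w => (w (Fin.last n))⁻¹ • initV w) := by
        rw [Finset.centerMass_eq_of_sum_1 _ _ hlast1.symm]
      rw [this]
      apply Finset.centerMass_mem_convexHull
      · exact fun w hw => mul_nonneg (hc w) (le_of_lt (hWppos w hw))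
      · rw [← hlast1]; norm_num
      · intro w hw
        rw [hQ]
        exact Finset.mem_coe.mpr (Finset.mem_image.mpr ⟨w, hw, rfl⟩)
    · have hDconv : Convex ℝ D := by
        intro x hx y hy a b ha hb hab
        intro p hp
        have h1 := hx p hp
        have h2 := hy p hp
        rw [inner_add_right, real_inner_smul_right, real_inner_smul_right]
        have e1 := mul_le_mul_of_nonneg_left h1 ha
        have e2 := mul_le_mul_of_nonneg_left h2 hb
        have hp2 : a * p.2 + b * p.2 = p.2 := by rw [← add_mul, hab, one_mul]
        nlinarith [e1, e2, hp2]
      apply convexHull_min _ hDconv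
      intro q hq
      rw [hQ] at hq
      obtain ⟨w, hw, rfl⟩ := Finset.mem_image.mp (Finset.mem_coe.mp hq)
      rw [claim1]
      have hwpos := hWppos w hw
      have : lift ((w (Fin.last n))⁻¹ • initV w) 1 = (w (Fin.last n))⁻¹ • w := by
        have h := lift_smul ((w (Fin.last n))⁻¹) (initV w) (w (Fin.last n))
        rw [inv_mul_cancel₀ (ne_of_gt hwpos)] at h
        rw [← h, lift_eta]
      rw [this]
      apply hCone_smul_mem (le_of_lt (inv_pos.mpr hwpos))
      rw [hW]
      apply mem_fgCone_of_mem
      rw [hWp, Finset.mem_filter] at hw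
      exact hw.1
  -- Q is nonempty
  have hQne : Q.Nonempty := by
    have hxW : lift x₀ 1 ∈ fgCone W := by rw [← hW]; exact (claim1 x₀).mp hx₀
    obtain ⟨c, hc, hsum⟩ := hxW
    by_contra hQe
    rw [Finset.not_nonempty_iff_eq_empty] at hQe
    have hWpe : Wp = ∅ := by
      by_contra hWpe
      obtain ⟨w, hw⟩ := Finset.nonempty_iff_ne_empty.mpr hWpe
      have : ((w (Fin.last n))⁻¹ • initV w) ∈ Q :=
        Finset.mem_image.mpr ⟨w, hw, rfl⟩
      rw [hQe] at this
      exact absurd this (Finset.notMem_empty _)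
    have hlast1 := congrArg (fun z : E (n+1) => z (Fin.last n)) hsum
    simp only [lift_last] at hlast1
    have : ∑ w ∈ W, (c w • w) (Fin.last n) = 0 := by
      apply Finset.sum_eq_zero
      intro w hw
      by_cases h : w (Fin.last n) = 0
      · have : (c w • w) (Fin.last n) = c w * w (Fin.last n) := rfl
        rw [this, h, mul_zero]
      · exfalso
        have : w ∈ Wp := by rw [hWp, Finset.mem_filter]; exact ⟨hw, h⟩
        rw [hWpe] at this
        exact absurd this (Finset.notMem_empty _)
    rw [show ∑ w ∈ W, c w • w = ∑ w ∈ W, c w • w from rfl] at hlast1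
    have hsum_apply : (∑ w ∈ W, c w • w) (Fin.last n) = ∑ w ∈ W, (c w • w) (Fin.last n) := by
      rw [WithLp.ofLp_sum]; exact Finset.sum_apply _ _ _
    rw [hsum_apply, this] at hlast1
    norm_num at hlast1
  exact ⟨Q, hQne, hDQ⟩
lemma polytope_inter {n : ℕ} {A B : Set (E n)} (hA : IsPolytope A) (hB : IsPolytope B)
    (hne : (A ∩ B).Nonempty) : IsPolytope (A ∩ B) := by
  classical
  obtain ⟨sA, hsA, rfl⟩ := hA
  obtain ⟨sB, hsB, rfl⟩ := hB
  obtain ⟨UA, hUA⟩ := polytope_H sA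
  obtain ⟨UB, hUB⟩ := polytope_H sB
  have hset : convexHull ℝ (sA : Set (E n)) ∩ convexHull ℝ (sB : Set (E n))
      = {x : E n | ∀ p ∈ UA ∪ UB, ⟪p.1, x⟫ + p.2 ≤ 0} := by
    rw [hUA, hUB]
    ext x
    simp only [Set.mem_inter_iff, Set.mem_setOf_eq, Finset.mem_union]
    constructor
    · rintro ⟨h1, h2⟩ p hp
      rcases hp with hp | hp
      · exact h1 p hp
      · exact h2 p hp
    · intro h
      exact ⟨fun p hp => h p (Or.inl hp), fun p hp => h p (Or.inr hp)⟩
  rw [hset]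
  apply H_bounded_polytope
  · apply Bornology.IsBounded.subset
    · exact ((sA.finite_toSet.isCompact_convexHull ℝ).isBounded)
    · rw [← hset]
      exact Set.inter_subset_left
  · rw [← hset]; exact hne

lemma Tan_mono {n : ℕ} {P Q : Set (E n)} (h : P ⊆ Q) (x : E n) : Tan P x ⊆ Tan Q x := by
  rintro v ⟨l, hl, hseg⟩
  exact ⟨l, hl, fun y hy => h (hseg hy)⟩

lemma Tan_inter {n : ℕ} {A B : Set (E n)} (hA : Convex ℝ A) (hB : Convex ℝ B)
    {x : E n} (hxA : x ∈ A) (hxB : x ∈ B) :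
    Tan (A ∩ B) x = Tan A x ∩ Tan B x := by
  apply Set.Subset.antisymm
  · intro v hv
    exact ⟨Tan_mono Set.inter_subset_left x hv, Tan_mono Set.inter_subset_right x hv⟩
  · rintro v ⟨⟨l₁, hl₁, hseg₁⟩, ⟨l₂, hl₂, hseg₂⟩⟩
    refine ⟨min l₁ l₂, lt_min hl₁ hl₂, ?_⟩
    intro y hy
    constructor
    · apply hseg₁
      -- y is on segment from x to x + min l₁ l₂ • v ⊆ segment from x to x + l₁ • v
      have hsub : segment ℝ x (x + min l₁ l₂ • v) ⊆ segment ℝ x (x + l₁ • v) := by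
        apply Convex.segment_subset (convex_segment _ _)
        · exact left_mem_segment ℝ _ _
        · rw [segment_eq_image']
          refine ⟨min l₁ l₂ / l₁, ⟨by positivity, by
            rw [div_le_one hl₁]; exact min_le_left _ _⟩, ?_⟩
          show x + ((min l₁ l₂) / l₁) • (x + l₁ • v - x) = x + (min l₁ l₂) • v
          rw [add_sub_cancel_left, smul_smul, div_mul_cancel₀ _ (ne_of_gt hl₁)]
      exact hsub hy
    · apply hseg₂
      have hsub : segment ℝ x (x + min l₁ l₂ • v) ⊆ segment ℝ x (x + l₂ • v) := by
        apply Convex.segment_subset (convex_segment _ _)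
        · exact left_mem_segment ℝ _ _
        · rw [segment_eq_image']
          refine ⟨min l₁ l₂ / l₂, ⟨by positivity, by
            rw [div_le_one hl₂]; exact min_le_right _ _⟩, ?_⟩
          show x + ((min l₁ l₂) / l₂) • (x + l₂ • v - x) = x + (min l₁ l₂) • v
          rw [add_sub_cancel_left, smul_smul, div_mul_cancel₀ _ (ne_of_gt hl₂)]
      exact hsub hy

/-- Tangent cone of a finite union of closed convex sets. -/
lemma Tan_sUnion {n : ℕ} (F : Finset (Set (E n)))
    (hF : ∀ A ∈ F, Convex ℝ A ∧ IsClosed A) (x : E n) (hx : x ∈ ⋃₀ (F : Set (Set (E n)))) :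
    Tan (⋃₀ (F : Set (Set (E n)))) x
      = ⋃₀ ((F.filter (fun A => x ∈ A)).image (fun A => Tan A x) : Set (Set (E n))) := by
  classical
  apply Set.Subset.antisymm
  · rintro v ⟨l, hl, hseg⟩
    -- the points x + (l/(k+1)) • v each lie in some member of F
    have hpt : ∀ k : ℕ, x + (l / (k+1)) • v ∈ ⋃₀ (F : Set (Set (E n))) := by
      intro k
      apply hseg
      rw [segment_eq_image']
      refine ⟨1 / ((k:ℝ)+1), ⟨by positivity, ?_⟩, ?_⟩
      · rw [div_le_one (by positivity)]
        have := Nat.cast_nonneg (α := ℝ) k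
        linarith
      · show x + (1 / ((k:ℝ)+1)) • (x + l • v - x) = x + (l / (k+1)) • v
        rw [add_sub_cancel_left, smul_smul, one_div, inv_mul_eq_div]
    have hchoice : ∀ k : ℕ, ∃ A : {A // A ∈ F}, x + (l / (k+1)) • v ∈ (A : Set (E n)) := by
      intro k
      obtain ⟨A, hAF, hmem⟩ := hpt k
      exact ⟨⟨A, hAF⟩, hmem⟩
    choose g hg using hchoice
    obtain ⟨A₀, hfiber⟩ := Finite.exists_infinite_fiber g
    -- x ∈ A₀ since A₀ is closed and contains points arbitrarily close to x
    have hxA₀ : x ∈ (A₀ : Set (E n)) := by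
      have hclosed := (hF A₀ A₀.2).2
      rw [← hclosed.closure_eq]
      rw [Metric.mem_closure_iff]
      intro ε hε
      -- pick k in the fiber with l‖v‖/(k+1) < ε
      have hinf : (g ⁻¹' {A₀}).Infinite := Set.infinite_coe_iff.mp hfiber
      by_cases hv : v = 0
      · -- then x + (l/1) • v = x ∈ A₀ via any fiber point
        obtain ⟨k, hk⟩ := hinf.nonempty
        have := hg k
        rw [Set.mem_preimage, Set.mem_singleton_iff] at hk
        rw [hk] at this
        rw [hv, smul_zero, add_zero] at this
        exact ⟨x, this, by simpa using hε⟩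
      · obtain ⟨k, hkmem, hk⟩ := hinf.exists_gt (Nat.ceil (l * ‖v‖ / ε))
        rw [Set.mem_preimage, Set.mem_singleton_iff] at hkmem
        refine ⟨x + (l / (k+1)) • v, by rw [← hkmem]; exact hg k, ?_⟩
        have hc1 : l * ‖v‖ / ε ≤ (Nat.ceil (l * ‖v‖ / ε) : ℝ) := Nat.le_ceil _
        have hc2 : ((Nat.ceil (l * ‖v‖ / ε) : ℕ) : ℝ) < (k : ℝ) := by exact_mod_cast hk
        have hc3 : l * ‖v‖ / ε < (k : ℝ) := lt_of_le_of_lt hc1 hc2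
        have hεk : l * ‖v‖ < ε * ((k : ℝ) + 1) := by
          rw [div_lt_iff₀ hε] at hc3
          nlinarith
        rw [dist_eq_norm]
        have he : x - (x + (l / ((k:ℝ)+1)) • v) = -((l / ((k:ℝ)+1)) • v) := by abel
        rw [he, norm_neg, norm_smul, Real.norm_eq_abs,
          abs_of_pos (by positivity), div_mul_eq_mul_div, div_lt_iff₀ (by positivity)]
        nlinarith
    -- now conclude: some fiber point gives membership in Tan A₀ x
    have hinf : (g ⁻¹' {A₀}).Infinite := Set.infinite_coe_iff.mp hfiber
    obtain ⟨k, hk⟩ := hinf.nonempty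
    rw [Set.mem_preimage, Set.mem_singleton_iff] at hk
    have hmem := hg k
    rw [hk] at hmem
    rw [Set.mem_sUnion]
    refine ⟨Tan (A₀ : Set (E n)) x, ?_, ?_⟩
    · rw [Finset.mem_coe, Finset.mem_image]
      exact ⟨A₀, Finset.mem_filter.mpr ⟨A₀.2, hxA₀⟩, rfl⟩
    · -- v ∈ Tan A₀ x by convexity with endpoint x + (l/(k+1)) • v
      refine ⟨l / ((k:ℝ)+1), by positivity, ?_⟩
      exact (hF A₀ A₀.2).1.segment_subset hxA₀ hmem
  · intro v hv
    rw [Set.mem_sUnion] at hv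
    obtain ⟨T, hT, hvT⟩ := hv
    rw [Finset.mem_coe, Finset.mem_image] at hT
    obtain ⟨A, hA, rfl⟩ := hT
    rw [Finset.mem_filter] at hA
    exact Tan_mono (fun y hy => Set.mem_sUnion.mpr ⟨A, Finset.mem_coe.mpr hA.1, hy⟩) x hvT
-- basic polytope facts
lemma polytope_convex_closed {n : ℕ} {A : Set (E n)} (hA : IsPolytope A) :
    Convex ℝ A ∧ IsClosed A := by
  obtain ⟨s, _, rfl⟩ := hA
  exact ⟨convex_convexHull ℝ _, (s.finite_toSet.isCompact_convexHull ℝ).isClosed⟩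

/-- Part I: the polytope case. -/
lemma polytope_kappa {n : ℕ} (φ φd : Set (E n) → ℝ)
    (hφ : IsConeValuation φ) (hsimple : IsSimple φ) (hnorm : φ (Set.univ : Set (E n)) = 1)
    (hdext : ∀ C : Set (E n), IsPolyhedralCone C → φd C = φ (polarDual C))
    (κ : Set (E n) → E n → ℝ)
    (hκ : ∀ (P : Set (E n)) (x : E n), κ P x = if x ∈ P then φd (Tan P x) else 0)
    (s : Finset (E n)) (hs : s.Nonempty) :
    (∀ x : E n, κ (convexHull ℝ (s : Set (E n))) x ≠ 0 → x ∈ s) ∧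
    ∑ v ∈ s, κ (convexHull ℝ (s : Set (E n))) v = 1 := by
  classical
  have hκP : ∀ x ∈ convexHull ℝ (s : Set (E n)),
      κ (convexHull ℝ (s : Set (E n))) x = φ (hCone (s.image (fun q => q - x))) := by
    intro x hx
    rw [hκ, if_pos hx, Tan_convexHull s hx, hdext _ (isPolyhedralCone_fgCone _),
      polarDual_fgCone]
  constructor
  · intro x hne
    have hxP : x ∈ convexHull ℝ (s : Set (E n)) := by
      by_contra hxP
      rw [hκ, if_neg hxP] at hne
      exact hne rfl
    rw [hκP x hxP] at hne
    have hdim : ¬ (coneDim (hCone (s.image (fun q => q - x))) < n) := by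
      intro h
      exact hne (hsimple _ ⟨s.image (fun q => q - x), rfl⟩ h)
    have hle : coneDim (hCone (s.image (fun q => q - x))) ≤ n := by
      have := Submodule.finrank_le (Submodule.span ℝ (hCone (s.image (fun q => q - x))))
      rwa [finrank_euclideanSpace_fin] at this
    have heq : coneDim (hCone (s.image (fun q => q - x))) = n := by omega
    apply mem_of_span_normal_top hxP
    apply Submodule.eq_top_of_finrank_eq
    rw [finrank_euclideanSpace_fin]
    exact heq
  · have : ∀ v ∈ s, κ (convexHull ℝ (s : Set (E n))) v
        = φ (hCone (s.image (fun q => q - v))) := by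
      intro v hv
      exact hκP v (subset_convexHull ℝ (s : Set (E n)) (Finset.mem_coe.mpr hv))
    rw [Finset.sum_congr rfl this]
    exact sum_normal_phi hφ hsimple hnorm s hs

/-- Part II: induction over the number of polytopes. -/
lemma main_induction {n : ℕ} (φ φd : Set (E n) → ℝ)
    (hφ : IsConeValuation φ) (hsimple : IsSimple φ) (hnorm : φ (Set.univ : Set (E n)) = 1)
    (hd0 : φd ∅ = 0)
    (hdval : ∀ A B : Set (E n), IsConeUnion A → IsConeUnion B →
      φd (A ∪ B) + φd (A ∩ B) = φd A + φd B)
    (hdext : ∀ C : Set (E n), IsPolyhedralCone C → φd C = φ (polarDual C))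
    (κ : Set (E n) → E n → ℝ)
    (hκ : ∀ (P : Set (E n)) (x : E n), κ P x = if x ∈ P then φd (Tan P x) else 0)
    (χ : Set (E n) → ℝ) (hχ0 : χ ∅ = 0)
    (hχ1 : ∀ P : Set (E n), IsPolytope P → χ P = 1)
    (hχval : ∀ A B : Set (E n), IsPolyhedron A → IsPolyhedron B →
      χ (A ∪ B) + χ (A ∩ B) = χ A + χ B) :
    ∀ (k : ℕ) (F : Finset (Set (E n))), F.card ≤ k → (∀ A ∈ F, IsPolytope A) →
      {x : E n | κ (⋃₀ (F : Set (Set (E n)))) x ≠ 0}.Finite ∧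
      ∑ᶠ x : E n, κ (⋃₀ (F : Set (Set (E n)))) x = χ (⋃₀ (F : Set (Set (E n)))) := by
  classical
  -- κ of the empty set vanishes
  have hκempty : ∀ x : E n, κ (∅ : Set (E n)) x = 0 := by
    intro x
    rw [hκ, if_neg (Set.notMem_empty x)]
  -- polytope evaluation packaged
  have hpolytope : ∀ A : Set (E n), IsPolytope A →
      {x : E n | κ A x ≠ 0}.Finite ∧ ∑ᶠ x : E n, κ A x = χ A := by
    intro A hA
    obtain ⟨s, hsne, rfl⟩ := hA
    obtain ⟨h1, h2⟩ := polytope_kappa φ φd hφ hsimple hnorm hdext κ hκ s hsne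
    have hsupp : Function.support (κ (convexHull ℝ (s : Set (E n)))) ⊆ (s : Set (E n)) := by
      intro x hx
      exact Finset.mem_coe.mpr (h1 x hx)
    constructor
    · exact Set.Finite.subset s.finite_toSet hsupp
    · rw [finsum_eq_sum_of_support_subset _ hsupp, h2,
        hχ1 _ ⟨s, hsne, rfl⟩]
  intro k
  induction k with
  | zero =>
    intro F hcard _
    have hF : F = ∅ := Finset.card_eq_zero.mp (Nat.le_zero.mp hcard)
    subst hF
    simp only [Finset.coe_empty, Set.sUnion_empty]
    constructor
    · convert Set.finite_empty
      ext x
      simp [hκempty x]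
    · rw [hχ0]
      have : (fun x : E n => κ (∅ : Set (E n)) x) = fun _ => 0 := funext hκempty
      rw [this]
      exact finsum_zero
  | succ k ih =>
    intro F hcard hF
    rcases Finset.eq_empty_or_nonempty F with rfl | ⟨A, hAF⟩
    · simp only [Finset.coe_empty, Set.sUnion_empty]
      constructor
      · convert Set.finite_empty
        ext x
        simp [hκempty x]
      · rw [hχ0]
        have : (fun x : E n => κ (∅ : Set (E n)) x) = fun _ => 0 := funext hκempty
        rw [this]
        exact finsum_zero
    · set G : Finset (Set (E n)) := F.erase A with hG
      have hAG : A ∉ G := Finset.notMem_erase A F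
      have hFG : F = insert A G := by rw [hG, Finset.insert_erase hAF]
      have hGcard : G.card ≤ k := by
        have h1 : G.card = F.card - 1 := Finset.card_erase_of_mem hAF
        have h2 : 1 ≤ F.card := Finset.card_pos.mpr ⟨A, hAF⟩
        omega
      have hGpoly : ∀ B ∈ G, IsPolytope B := fun B hB => hF B (Finset.mem_of_mem_erase hB)
      have hApoly : IsPolytope A := hF A hAF
      set Q : Set (E n) := ⋃₀ (G : Set (Set (E n))) with hQ
      have hPQ : ⋃₀ (F : Set (Set (E n))) = A ∪ Q := by
        rw [hFG, Finset.coe_insert, Set.sUnion_insert]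
      -- the intersection pieces
      set G2 : Finset (Set (E n)) := G.image (fun B => A ∩ B) with hG2
      have hG2U : ⋃₀ (G2 : Set (Set (E n))) = A ∩ Q := by
        rw [hG2, hQ]
        ext y
        simp only [Set.mem_sUnion, Finset.mem_coe, Finset.mem_image, Set.mem_inter_iff]
        constructor
        · rintro ⟨C, ⟨B, hB, rfl⟩, hyC⟩
          exact ⟨hyC.1, B, hB, hyC.2⟩
        · rintro ⟨hyA, B, hB, hyB⟩
          exact ⟨A ∩ B, ⟨B, hB, rfl⟩, hyA, hyB⟩
      set G' : Finset (Set (E n)) := G2.filter (fun C => C.Nonempty) with hG'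
      have hG'U : ⋃₀ (G' : Set (Set (E n))) = A ∩ Q := by
        rw [← hG2U, hG', hG2]
        ext y
        simp only [Set.mem_sUnion, Finset.mem_coe, Finset.mem_filter]
        constructor
        · rintro ⟨C, ⟨hC, _⟩, hyC⟩
          exact ⟨C, hC, hyC⟩
        · rintro ⟨C, hC, hyC⟩
          exact ⟨C, ⟨hC, ⟨y, hyC⟩⟩, hyC⟩
      have hG'card : G'.card ≤ k := by
        calc G'.card ≤ G2.card := Finset.card_filter_le _ _
          _ ≤ G.card := Finset.card_image_le
          _ ≤ k := hGcard
      have hG'poly : ∀ C ∈ G', IsPolytope C := by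
        intro C hC
        rw [hG', Finset.mem_filter] at hC
        obtain ⟨hC2, hCne⟩ := hC
        rw [hG2, Finset.mem_image] at hC2
        obtain ⟨B, hB, rfl⟩ := hC2
        exact polytope_inter hApoly (hGpoly B hB) hCne
      obtain ⟨hQfin, hQsum⟩ := ih G hGcard hGpoly
      obtain ⟨hRfin, hRsum⟩ := ih G' hG'card hG'poly
      rw [hG'U] at hRfin hRsum
      obtain ⟨hAfin', hAsum'⟩ := hpolytope A hApoly
      rw [← hQ] at hQfin hQsum
      -- pointwise valuation identity
      have hmembers : ∀ B ∈ insert A G, Convex ℝ B ∧ IsClosed B := by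
        intro B hB
        rcases Finset.mem_insert.mp hB with rfl | hB
        · exact polytope_convex_closed hApoly
        · exact polytope_convex_closed (hGpoly B hB)
      have hGmembers : ∀ B ∈ G, Convex ℝ B ∧ IsClosed B :=
        fun B hB => polytope_convex_closed (hGpoly B hB)
      have hG2members : ∀ C ∈ G2, Convex ℝ C ∧ IsClosed C := by
        intro C hC
        rw [hG2, Finset.mem_image] at hC
        obtain ⟨B, hB, rfl⟩ := hC
        obtain ⟨hc1, hc2⟩ := polytope_convex_closed (hGpoly B hB)
        obtain ⟨hc3, hc4⟩ := polytope_convex_closed hApoly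
        exact ⟨hc3.inter hc1, hc4.inter hc2⟩
      have hAconv : Convex ℝ A := (polytope_convex_closed hApoly).1
      have hTanPoly : ∀ (B : Set (E n)) (y : E n), IsPolytope B → y ∈ B →
          IsPolyhedralCone (Tan B y) := by
        intro B y hB hy
        obtain ⟨sB, _, rfl⟩ := hB
        rw [Tan_convexHull sB hy]
        exact isPolyhedralCone_fgCone _
      have hTanQ_eq : ∀ x, x ∈ Q → Tan Q x
          = ⋃₀ ((G.filter (fun B => x ∈ B)).image (fun B => Tan B x) : Set (Set (E n))) := by
        intro x hx
        rw [hQ]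
        exact Tan_sUnion G hGmembers x (hQ ▸ hx)
      have hTanQ_union : ∀ x, x ∈ Q → IsConeUnion (Tan Q x) := by
        intro x hx
        refine ⟨(G.filter (fun B => x ∈ B)).image (fun B => Tan B x), ?_, hTanQ_eq x hx⟩
        intro T hT
        rw [Finset.mem_image] at hT
        obtain ⟨B, hB, rfl⟩ := hT
        rw [Finset.mem_filter] at hB
        exact hTanPoly B x (hGpoly B hB.1) hB.2
      have hPQ' : A ∪ Q = ⋃₀ ((insert A G : Finset (Set (E n))) : Set (Set (E n))) := by
        rw [Finset.coe_insert, Set.sUnion_insert, hQ]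
      have hpt : ∀ x : E n, κ (A ∪ Q) x = κ A x + κ Q x - κ (A ∩ Q) x := by
        intro x
        by_cases hxA : x ∈ A
        · by_cases hxQ : x ∈ Q
          · -- the interesting case
            have hxP : x ∈ A ∪ Q := Or.inl hxA
            have hTanA_union : IsConeUnion (Tan A x) :=
              ⟨{Tan A x}, by
                intro T hT
                rw [Finset.mem_singleton] at hT
                subst hT
                exact hTanPoly A x hApoly hxA, by simp⟩
            have hTanP : Tan (A ∪ Q) x = Tan A x ∪ Tan Q x := by
              rw [hPQ', Tan_sUnion (insert A G) hmembers x
                (by rw [← hPQ']; exact hxP)]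
              rw [Finset.filter_insert, if_pos hxA, Finset.image_insert, Finset.coe_insert,
                Set.sUnion_insert, hTanQ_eq x hxQ]
            have hTanR : Tan (A ∩ Q) x = Tan A x ∩ Tan Q x := by
              have hx2 : x ∈ ⋃₀ (G2 : Set (Set (E n))) := by rw [hG2U]; exact ⟨hxA, hxQ⟩
              rw [← hG2U, Tan_sUnion G2 hG2members x hx2]
              apply Set.Subset.antisymm
              · intro v hv
                rw [Set.mem_sUnion] at hv
                obtain ⟨T, hT, hvT⟩ := hv
                rw [Finset.mem_coe, Finset.mem_image] at hT
                obtain ⟨C, hC, rfl⟩ := hT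
                rw [Finset.mem_filter] at hC
                obtain ⟨hCG2, hxC⟩ := hC
                rw [hG2, Finset.mem_image] at hCG2
                obtain ⟨B, hB, rfl⟩ := hCG2
                have hBconv := (hGmembers B hB).1
                rw [Tan_inter hAconv hBconv hxC.1 hxC.2] at hvT
                constructor
                · exact hvT.1
                · apply Tan_mono (Set.subset_sUnion_of_mem (Finset.mem_coe.mpr hB)) x
                  exact hvT.2
              · rintro v ⟨hvA, hvQ⟩
                rw [hTanQ_eq x hxQ, Set.mem_sUnion] at hvQ
                obtain ⟨T, hT, hvT⟩ := hvQ
                rw [Finset.mem_coe, Finset.mem_image] at hT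
                obtain ⟨B, hB, rfl⟩ := hT
                rw [Finset.mem_filter] at hB
                obtain ⟨hBG, hxB⟩ := hB
                rw [Set.mem_sUnion]
                refine ⟨Tan (A ∩ B) x, ?_, ?_⟩
                · rw [Finset.mem_coe, Finset.mem_image]
                  refine ⟨A ∩ B, ?_, rfl⟩
                  rw [Finset.mem_filter]
                  exact ⟨by rw [hG2]; exact Finset.mem_image.mpr ⟨B, hBG, rfl⟩, hxA, hxB⟩
                · rw [Tan_inter hAconv (hGmembers B hBG).1 hxA hxB]
                  exact ⟨hvA, hvT⟩
            have hval := hdval (Tan A x) (Tan Q x) hTanA_union (hTanQ_union x hxQ)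
            rw [hκ (A ∪ Q) x, if_pos hxP, hTanP]
            rw [hκ A x, if_pos hxA, hκ Q x, if_pos hxQ]
            rw [hκ (A ∩ Q) x, if_pos ⟨hxA, hxQ⟩, hTanR]
            linarith
          · -- x ∈ A only
            have hxP : x ∈ A ∪ Q := Or.inl hxA
            have hfil : (insert A G).filter (fun B => x ∈ B) = {A} := by
              rw [Finset.filter_insert, if_pos hxA]
              have : G.filter (fun B => x ∈ B) = ∅ := by
                rw [Finset.filter_eq_empty_iff]
                intro B hB hxB
                exact hxQ (Set.mem_sUnion.mpr ⟨B, Finset.mem_coe.mpr hB, hxB⟩)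
              rw [this]
              rfl
            have hTanP : Tan (A ∪ Q) x = Tan A x := by
              rw [hPQ', Tan_sUnion (insert A G) hmembers x (by rw [← hPQ']; exact hxP), hfil]
              simp
            rw [hκ (A ∪ Q) x, if_pos hxP, hTanP, hκ A x, if_pos hxA,
              hκ Q x, if_neg hxQ, hκ (A ∩ Q) x, if_neg (fun h => hxQ h.2)]
            ring
        · by_cases hxQ : x ∈ Q
          · -- x ∈ Q only
            have hxP : x ∈ A ∪ Q := Or.inr hxQ
            have hfil : (insert A G).filter (fun B => x ∈ B) = G.filter (fun B => x ∈ B) := by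
              rw [Finset.filter_insert, if_neg hxA]
            have hTanP : Tan (A ∪ Q) x = Tan Q x := by
              rw [hPQ', Tan_sUnion (insert A G) hmembers x (by rw [← hPQ']; exact hxP), hfil,
                hTanQ_eq x hxQ]
            rw [hκ (A ∪ Q) x, if_pos hxP, hTanP, hκ A x, if_neg hxA,
              hκ Q x, if_pos hxQ, hκ (A ∩ Q) x, if_neg (fun h => hxA h.1)]
            ring
          · have hxP : x ∉ A ∪ Q := fun h => h.elim hxA hxQ
            rw [hκ (A ∪ Q) x, if_neg hxP, hκ A x, if_neg hxA,
              hκ Q x, if_neg hxQ, hκ (A ∩ Q) x, if_neg (fun h => hxA h.1)]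
            ring
      rw [hPQ]
      have hsupP : {x : E n | κ (A ∪ Q) x ≠ 0} ⊆
          {x | κ A x ≠ 0} ∪ {x | κ Q x ≠ 0} ∪ {x | κ (A ∩ Q) x ≠ 0} := by
        intro x hx
        by_contra hcon
        simp only [Set.mem_union, Set.mem_setOf_eq, not_or, not_not] at hcon
        obtain ⟨⟨h1, h2⟩, h3⟩ := hcon
        rw [Set.mem_setOf_eq, hpt x, h1, h2, h3] at hx
        norm_num at hx
      have hPfin : {x : E n | κ (A ∪ Q) x ≠ 0}.Finite :=
        Set.Finite.subset (((hAfin'.union hQfin).union hRfin)) hsupP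
      refine ⟨hPfin, ?_⟩
      have hfun : (fun x => κ (A ∪ Q) x) = fun x => (κ A x + κ Q x) - κ (A ∩ Q) x :=
        funext hpt
      rw [hfun]
      have hAQfin : (Function.support (fun x => κ A x + κ Q x)).Finite := by
        apply Set.Finite.subset (hAfin'.union hQfin)
        intro x hx
        rw [Function.mem_support] at hx
        by_contra hcon
        simp only [Set.mem_union, Set.mem_setOf_eq, not_or, not_not] at hcon
        rw [hcon.1, hcon.2, add_zero] at hx
        exact hx rfl
      rw [finsum_sub_distrib hAQfin hRfin, finsum_add_distrib hAfin' hQfin]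
      rw [hAsum', hQsum, hRsum]
      have hχv := hχval A Q ⟨{A}, by simpa using hApoly, by simp⟩ ⟨G, hGpoly, hQ⟩
      linarith


/-- Polyhedral Gauss–Bonnet theorem: for the vertex curvature `κ` built from a simple
normalized cone valuation `φ` via the extension `φd` of its dual valuation,
`κ(P,·)` has finite support and `Σ_{x} κ(P,x) = χ(P)` for every polyhedron `P`,
where `χ` is the Euler characteristic. -/
theorem stmt11 {n : ℕ} (φ φd : Set (E n) → ℝ)
    (hφ : IsConeValuation φ) (hsimple : IsSimple φ) (hnorm : φ (Set.univ : Set (E n)) = 1)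
    (hd0 : φd ∅ = 0)
    (hdval : ∀ A B : Set (E n), IsConeUnion A → IsConeUnion B →
      φd (A ∪ B) + φd (A ∩ B) = φd A + φd B)
    (hdext : ∀ C : Set (E n), IsPolyhedralCone C → φd C = φ (polarDual C))
    (κ : Set (E n) → E n → ℝ)
    (hκ : ∀ (P : Set (E n)) (x : E n), κ P x = if x ∈ P then φd (Tan P x) else 0)
    (χ : Set (E n) → ℝ) (hχ0 : χ ∅ = 0)
    (hχ1 : ∀ P : Set (E n), IsPolytope P → χ P = 1)
    (hχval : ∀ A B : Set (E n), IsPolyhedron A → IsPolyhedron B →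
      χ (A ∪ B) + χ (A ∩ B) = χ A + χ B)
    (P : Set (E n)) (hP : IsPolyhedron P) :
    {x : E n | κ P x ≠ 0}.Finite ∧ ∑ᶠ x : E n, κ P x = χ P := by
  obtain ⟨F, hF, rfl⟩ := hP
  exact main_induction φ φd hφ hsimple hnorm hd0 hdval hdext κ hκ χ hχ0 hχ1 hχval
    F.card F le_rfl hF
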